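/- Suppose the finite relational structure A has a weak near-unanimity polymorphism of arity m (m ≥ 2). Then the digraph D(A) also has a weak near-unanimity polymorphism of arity m. Conversely, if D(A) has an m-ary WNU polymorphism, so does A. -/

import Mathlib

/-- The positions `i ∈ [k]` at which `a` equals the `i`-th entry of `r`. -/
def idxSet {A : Type} [DecidableEq A] {k : ℕ} (a : A) (r : Fin k → A) : Finset (Fin k) :=
  Finset.univ.filter (fun i => a = r i)

/-- Direction pattern of the oriented path `Q_I`: a single edge, then for each
`l ∈ [k]` a single edge (if `l ∈ I`) or a zigzag (otherwise), then a single edge. -/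
def qdirs {k : ℕ} (I : Finset (Fin k)) : List Bool :=
  [true] ++ ((List.finRange k).flatMap
    (fun l => if l ∈ I then [true] else [true, false, true])) ++ [true]

/-- Edge relation of the oriented path with direction pattern `ds`
(vertices are `0, 1, ..., ds.length`). -/
def pedge (ds : List Bool) (x y : ℕ) : Prop :=
  (y = x + 1 ∧ x < ds.length ∧ ds.getD x false = true) ∨
  (x = y + 1 ∧ y < ds.length ∧ ds.getD y false = false)

/-- Number of edges of the connecting path `P_(a,r) = Q_{idxSet a r}`. -/
def plen {A : Type} [DecidableEq A] {k : ℕ} (a : A) (r : Fin k → A) : ℕ :=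
  (qdirs (idxSet a r)).length

/-- Vertices of the digraph `D(A)` for the structure `(A; R)`. -/
inductive DVert {A : Type} [DecidableEq A] {k : ℕ} (R : Set (Fin k → A)) : Type where
  | base : A → DVert R
  | top : (r : Fin k → A) → r ∈ R → DVert R
  | inner : (a : A) → (r : Fin k → A) → r ∈ R → (j : ℕ) → 0 < j → j < plen a r → DVert R

/-- `isAt v a r x` : vertex `v` of `D(A)` sits at position `x` of the connecting path
`P_(a,r)`. -/
def isAt {A : Type} [DecidableEq A] {k : ℕ} {R : Set (Fin k → A)} :
    DVert R → A → (Fin k → A) → ℕ → Prop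
  | .base a', a, _, x => a' = a ∧ x = 0
  | .top r' _, a, r, x => r' = r ∧ x = plen a r
  | .inner a' r' _ j _ _, a, r, x => a' = a ∧ r' = r ∧ x = j

/-- The edge relation of the digraph `D(A)`. -/
def dedge {A : Type} [DecidableEq A] {k : ℕ} {R : Set (Fin k → A)}
    (u v : DVert R) : Prop :=
  ∃ a r, r ∈ R ∧ ∃ x y, isAt u a r x ∧ isAt v a r y ∧
    pedge (qdirs (idxSet a r)) x y

/-- Height of position `x` along a path with direction pattern `ds`. -/
def phgt (ds : List Bool) (x : ℕ) : ℤ :=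
  ((ds.take x).count true : ℤ) - ((ds.take x).count false : ℤ)

/-- The level function of the balanced digraph `D(A)`. -/
def lvlD {A : Type} [DecidableEq A] {k : ℕ} {R : Set (Fin k → A)} : DVert R → ℕ
  | .base _ => 0
  | .top _ _ => k + 2
  | .inner a r _ j _ _ => (phgt (qdirs (idxSet a r)) j).toNat

/-- `walkAlong ds u v` : one can walk in `D(A)` from `u` to `v` following the
oriented path with direction pattern `ds` (i.e. there is a homomorphism of the path
into `D(A)` sending the initial vertex to `u` and the terminal vertex to `v`). -/
def walkAlong {A : Type} [DecidableEq A] {k : ℕ} {R : Set (Fin k → A)}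
    (ds : List Bool) (u v : DVert R) : Prop :=
  ∃ φ : ℕ → DVert R, φ 0 = u ∧ φ ds.length = v ∧
    ∀ x < ds.length,
      (ds.getD x false = true → dedge (φ x) (φ (x + 1))) ∧
      (ds.getD x false = false → dedge (φ (x + 1)) (φ x))

/-- `f` is an `m`-ary weak near-unanimity operation on `B`: idempotent and
`f(x,...,x,y) = f(x,...,y,x) = ⋯ = f(y,x,...,x)`. -/
def IsWNU {B : Type} (m : ℕ) (f : (Fin m → B) → B) : Prop :=
  (∀ x : B, f (fun _ => x) = x) ∧
  ∀ (x y : B) (p q : Fin m),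
    f (fun i => if i = p then y else x) = f (fun i => if i = q then y else x)

section Paths
open List
open scoped Classical

variable {k : ℕ}

def pre (I : Finset (Fin k)) (l : ℕ) : List Bool :=
  true :: (((List.finRange k).take l).flatMap
    (fun t => if t ∈ I then [true] else [true, false, true]))

def SS (I : Finset (Fin k)) (l : ℕ) : ℕ := (pre I l).length

def memN (I : Finset (Fin k)) (l : ℕ) : Prop := ∃ h : l < k, (⟨l, h⟩ : Fin k) ∈ I

lemma qdirs_eq (I : Finset (Fin k)) : qdirs I = pre I k ++ [true] := by
  simp [qdirs, pre,
    List.take_of_length_le (le_of_eq (show (List.finRange k).length = k from List.length_finRange))]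

lemma pre_succ (I : Finset (Fin k)) {l : ℕ} (h : l < k) :
    pre I (l+1) = pre I l ++ (if memN I l then [true] else [true, false, true]) := by
  have hl : l < (List.finRange k).length := by simpa [List.length_finRange]
  have hmem : memN I l ↔ (⟨l, h⟩ : Fin k) ∈ I := by
    constructor
    · rintro ⟨h', hh⟩; exact hh
    · intro hh; exact ⟨h, hh⟩
  simp only [pre, List.take_succ, List.getElem?_eq_getElem hl, List.getElem_finRange,
    Option.toList_some, List.flatMap_append, List.flatMap_singleton]
  rw [Fin.cast_mk]
  by_cases hI : (⟨l, h⟩ : Fin k) ∈ I <;> simp [hI, hmem.2, hmem]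

lemma SS_zero (I : Finset (Fin k)) : SS I 0 = 1 := by simp [SS, pre]

lemma SS_succ (I : Finset (Fin k)) {l : ℕ} (h : l < k) :
    SS I (l+1) = SS I l + (if memN I l then 1 else 3) := by
  by_cases hm : memN I l <;> simp [SS, pre_succ I h, hm]

lemma SS_pos (I : Finset (Fin k)) (l : ℕ) : 1 ≤ SS I l := by
  simp [SS, pre]

lemma SS_lt_succ (I : Finset (Fin k)) {l : ℕ} (h : l < k) : SS I l < SS I (l+1) := by
  rw [SS_succ I h]; split <;> omega

lemma SS_mono (I : Finset (Fin k)) {l l' : ℕ} (h : l ≤ l') (h' : l' ≤ k) :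
    SS I l ≤ SS I l' := by
  obtain ⟨d, rfl⟩ : ∃ d, l' = l + d := ⟨l' - l, by omega⟩
  clear h
  revert h'
  induction d with
  | zero => intro _; exact le_refl _
  | succ n ih =>
      intro h'
      calc SS I l ≤ SS I (l+n) := ih (by omega)
        _ ≤ SS I (l+n+1) := le_of_lt (SS_lt_succ I (by omega))

lemma len_qdirs (I : Finset (Fin k)) : (qdirs I).length = SS I k + 1 := by
  simp [qdirs_eq, SS]

lemma SS_lt_len (I : Finset (Fin k)) {l : ℕ} (h : l ≤ k) : SS I l < (qdirs I).length := by
  rw [len_qdirs]; exact Nat.lt_succ_of_le (SS_mono I h (le_refl k))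

lemma qdirs_decomp (I : Finset (Fin k)) {l : ℕ} (h : l ≤ k) :
    ∃ w : List Bool, qdirs I = pre I l ++ (true :: w) := by
  suffices H : ∀ d l, k = l + d → ∃ w, qdirs I = pre I l ++ (true :: w) by
    exact H (k - l) l (by omega)
  intro d
  induction d with
  | zero =>
      intro l hl
      have : l = k := by omega
      subst this
      exact ⟨[], qdirs_eq I⟩
  | succ n ih =>
      intro l hl
      have hlk : l < k := by omega
      obtain ⟨w, hw⟩ := ih (l+1) (by omega)
      rw [pre_succ I hlk] at hw
      by_cases hm : memN I l
      · exact ⟨true :: w, by rw [hw, if_pos hm]; simp⟩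
      · exact ⟨false :: true :: true :: w, by rw [hw, if_neg hm]; simp⟩

lemma getD_qdirs_SS (I : Finset (Fin k)) {l : ℕ} (h : l ≤ k) :
    (qdirs I).getD (SS I l) false = true := by
  obtain ⟨w, hw⟩ := qdirs_decomp I h
  rw [hw, show SS I l = (pre I l).length from rfl,
    List.getD_append_right _ _ _ _ (le_refl _)]
  simp

lemma getD_qdirs_zero (I : Finset (Fin k)) : (qdirs I).getD 0 false = true := by
  obtain ⟨w, hw⟩ := qdirs_decomp I (Nat.zero_le k)
  rw [hw]; simp [pre]

lemma zig_decomp (I : Finset (Fin k)) {l : ℕ} (h : l < k) (hm : ¬ memN I l) :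
    ∃ w : List Bool, qdirs I = pre I l ++ (true :: false :: true :: true :: w) := by
  obtain ⟨w, hw⟩ := qdirs_decomp I (show l + 1 ≤ k by omega)
  rw [pre_succ I h, if_neg hm] at hw
  exact ⟨w, by rw [hw]; simp⟩

lemma single_decomp (I : Finset (Fin k)) {l : ℕ} (h : l < k) (hm : memN I l) :
    ∃ w : List Bool, qdirs I = pre I l ++ (true :: true :: w) := by
  obtain ⟨w, hw⟩ := qdirs_decomp I (show l + 1 ≤ k by omega)
  rw [pre_succ I h, if_pos hm] at hw
  exact ⟨w, by rw [hw]; simp⟩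

lemma getD_zig (I : Finset (Fin k)) {l : ℕ} (h : l < k) (hm : ¬ memN I l) :
    (qdirs I).getD (SS I l + 1) false = false ∧
    (qdirs I).getD (SS I l + 2) false = true := by
  obtain ⟨w, hw⟩ := zig_decomp I h hm
  have hlen : (pre I l).length = SS I l := rfl
  constructor <;>
  · rw [hw, List.getD_append_right _ _ _ _ (by rw [hlen]; omega)]
    simp [hlen]

lemma getD_below_SS (I : Finset (Fin k)) {l : ℕ} (h : l ≤ k) :
    (qdirs I).getD (SS I l - 1) false = true := by
  cases l with
  | zero => rw [SS_zero]; simpa using getD_qdirs_zero I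
  | succ n =>
      have hn : n < k := by omega
      by_cases hm : memN I n
      · rw [SS_succ I hn, if_pos hm,
          show SS I n + 1 - 1 = SS I n from by omega]
        exact getD_qdirs_SS I (le_of_lt hn)
      · rw [SS_succ I hn, if_neg hm,
          show SS I n + 3 - 1 = SS I n + 2 from by omega]
        exact (getD_zig I hn hm).2

end Paths
section Heights
open List
open scoped Classical

variable {k : ℕ}

lemma phgt_zero (ds : List Bool) : phgt ds 0 = 0 := by simp [phgt]

lemma count_cons_calc (b : Bool) (w : List Bool) :
    ((b :: w).count true : ℤ) - ((b :: w).count false : ℤ)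
      = ((w.count true : ℤ) - (w.count false : ℤ)) + (if b then 1 else -1) := by
  cases b <;> simp [List.count_cons] <;> push_cast <;> ring

lemma count_append_calc (v w : List Bool) :
    (((v ++ w).count true : ℤ) - ((v ++ w).count false : ℤ))
      = ((v.count true : ℤ) - (v.count false : ℤ))
        + ((w.count true : ℤ) - (w.count false : ℤ)) := by
  simp [List.count_append]; push_cast; ring

lemma phgt_succ (ds : List Bool) {x : ℕ} (hx : x < ds.length) :
    phgt ds (x+1) = phgt ds x + (if ds.getD x false then 1 else -1) := by
  have h1 : ds.take (x+1) = ds.take x ++ [ds[x]] := by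
    rw [List.take_succ, List.getElem?_eq_getElem hx]; rfl
  have h2 : ds.getD x false = ds[x] := List.getD_eq_getElem ds false hx
  rw [phgt, h1, h2]
  cases hb : ds[x] <;> simp [List.count_append, phgt] <;> push_cast <;> ring

lemma count_pre (I : Finset (Fin k)) {l : ℕ} (h : l ≤ k) :
    (((pre I l).count true : ℤ) - ((pre I l).count false : ℤ)) = l + 1 := by
  induction l with
  | zero => simp [pre]
  | succ n ih =>
      have hn : n < k := by omega
      rw [pre_succ I hn, count_append_calc, ih (by omega)]
      by_cases hm : memN I n <;> simp [hm] <;> push_cast <;> ring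

lemma take_qdirs_SS (I : Finset (Fin k)) {l : ℕ} (h : l ≤ k) :
    (qdirs I).take (SS I l) = pre I l := by
  obtain ⟨w, hw⟩ := qdirs_decomp I h
  rw [hw, show SS I l = (pre I l).length from rfl, List.take_left]

lemma phgt_SS (I : Finset (Fin k)) {l : ℕ} (h : l ≤ k) :
    phgt (qdirs I) (SS I l) = l + 1 := by
  rw [phgt, take_qdirs_SS I h]
  exact count_pre I h

lemma phgt_qdirs_len (I : Finset (Fin k)) :
    phgt (qdirs I) ((qdirs I).length) = k + 2 := by
  rw [phgt, List.take_of_length_le (le_refl _), qdirs_eq I, count_append_calc,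
    count_pre I (le_refl k)]
  simp; omega

lemma phgt_P (I : Finset (Fin k)) {l : ℕ} (h : l < k) (hm : ¬ memN I l) :
    phgt (qdirs I) (SS I l + 1) = l + 2 := by
  have h1 : SS I l + 1 ≤ (qdirs I).length := le_of_lt (by
    have := SS_lt_len I (show l + 1 ≤ k by omega)
    have := SS_succ I h
    rw [if_neg hm] at this
    omega)
  rw [phgt_succ (qdirs I) (by omega), getD_qdirs_SS I (le_of_lt h), phgt_SS I (le_of_lt h)]
  simp; omega

lemma phgt_B (I : Finset (Fin k)) {l : ℕ} (h : l < k) (hm : ¬ memN I l) :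
    phgt (qdirs I) (SS I l + 2) = l + 1 := by
  have hsucc : SS I (l+1) = SS I l + 3 := by rw [SS_succ I h, if_neg hm]
  have h1 : SS I l + 2 ≤ (qdirs I).length := by
    have := SS_lt_len I (show l + 1 ≤ k by omega)
    omega
  rw [phgt_succ (qdirs I) (by omega), (getD_zig I h hm).1, phgt_P I h hm]
  simp; omega

lemma class_pre (I : Finset (Fin k)) {l : ℕ} (hl : l ≤ k) :
    ∀ p < SS I l, p = 0 ∨ ∃ t, t < l ∧
      (p = SS I t ∨ (¬ memN I t ∧ (p = SS I t + 1 ∨ p = SS I t + 2))) := by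
  induction l with
  | zero => intro p hp; rw [SS_zero] at hp; omega
  | succ n ih =>
      intro p hp
      have hn : n < k := by omega
      by_cases hps : p < SS I n
      · rcases ih (by omega) p hps with h0 | ⟨t, ht, hrest⟩
        · exact Or.inl h0
        · exact Or.inr ⟨t, by omega, hrest⟩
      · rw [SS_succ I hn] at hp
        by_cases hm : memN I n
        · rw [if_pos hm] at hp
          exact Or.inr ⟨n, by omega, Or.inl (by omega)⟩
        · rw [if_neg hm] at hp
          rcases (show p = SS I n ∨ p = SS I n + 1 ∨ p = SS I n + 2 by omega) with h | h | h
          · exact Or.inr ⟨n, by omega, Or.inl h⟩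
          · exact Or.inr ⟨n, by omega, Or.inr ⟨hm, Or.inl h⟩⟩
          · exact Or.inr ⟨n, by omega, Or.inr ⟨hm, Or.inr h⟩⟩

/-- Full classification of vertex positions `p ≤ L` of `Q_I`. -/
lemma classifyV (I : Finset (Fin k)) {p : ℕ} (hp : p ≤ (qdirs I).length) :
    p = 0 ∨ p = (qdirs I).length ∨ (∃ t, t ≤ k ∧ p = SS I t) ∨
      (∃ t, t < k ∧ ¬ memN I t ∧ (p = SS I t + 1 ∨ p = SS I t + 2)) := by
  have hlen := len_qdirs I
  by_cases h1 : p = (qdirs I).length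
  · exact Or.inr (Or.inl h1)
  by_cases h2 : p = SS I k
  · exact Or.inr (Or.inr (Or.inl ⟨k, le_refl k, h2⟩))
  have hp' : p < SS I k := by omega
  rcases class_pre I (le_refl k) p hp' with h0 | ⟨t, ht, hrest⟩
  · exact Or.inl h0
  rcases hrest with h | ⟨hm, h⟩
  · exact Or.inr (Or.inr (Or.inl ⟨t, le_of_lt ht, h⟩))
  · exact Or.inr (Or.inr (Or.inr ⟨t, ht, hm, h⟩))

/-- interior heights are in `[1, k+1]`. -/
lemma phgt_interior (I : Finset (Fin k)) {p : ℕ} (hp0 : 0 < p)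
    (hpl : p < (qdirs I).length) :
    1 ≤ phgt (qdirs I) p ∧ phgt (qdirs I) p ≤ k + 1 := by
  rcases classifyV I (le_of_lt hpl) with rfl | h | ⟨t, ht, rfl⟩ | ⟨t, ht, hm, h⟩
  · omega
  · omega
  · rw [phgt_SS I ht]
    have : (t : ℤ) ≤ (k : ℤ) := by exact_mod_cast ht
    omega
  · have htk : (t : ℤ) + 1 ≤ (k : ℤ) := by exact_mod_cast ht
    rcases h with rfl | rfl
    · rw [phgt_P I ht hm]; omega
    · rw [phgt_B I ht hm]; omega

/-- `false` bits occur only just after a zigzag start. -/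
lemma bitF_class (I : Finset (Fin k)) {p : ℕ} (hpl : p < (qdirs I).length)
    (hF : (qdirs I).getD p false = false) :
    ∃ t, t < k ∧ ¬ memN I t ∧ p = SS I t + 1 := by
  rcases classifyV I (le_of_lt hpl) with h | h | ⟨t, ht, rfl⟩ | ⟨t, ht, hm, h⟩
  · subst h; rw [getD_qdirs_zero I] at hF; exact absurd hF (by simp)
  · omega
  · rw [getD_qdirs_SS I ht] at hF; exact absurd hF (by simp)
  · rcases h with rfl | rfl
    · exact ⟨t, ht, hm, rfl⟩
    · rw [(getD_zig I ht hm).2] at hF; exact absurd hF (by simp)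

end Heights
section Moves
open scoped Classical

variable {k : ℕ}

lemma pedge_phgt {ds : List Bool} {x y : ℕ} (h : pedge ds x y) :
    phgt ds y = phgt ds x + 1 := by
  rcases h with ⟨rfl, hx, hT⟩ | ⟨rfl, hy, hF⟩
  · rw [phgt_succ ds hx, hT]; simp
  · rw [phgt_succ ds hy, hF]; simp

lemma pedge_bounds {ds : List Bool} {x y : ℕ} (h : pedge ds x y) :
    x ≤ ds.length ∧ y ≤ ds.length := by
  rcases h with ⟨rfl, hx, _⟩ | ⟨rfl, hy, _⟩ <;> omega

lemma up_E (I : Finset (Fin k)) {l : ℕ} (h : l ≤ k) :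
    pedge (qdirs I) (SS I l) (SS I l + 1) :=
  Or.inl ⟨rfl, SS_lt_len I h, getD_qdirs_SS I h⟩

lemma up_zero (I : Finset (Fin k)) : pedge (qdirs I) 0 1 :=
  Or.inl ⟨rfl, by rw [len_qdirs]; omega, getD_qdirs_zero I⟩

lemma up_B1 (I : Finset (Fin k)) {l : ℕ} (h : l < k) (hm : ¬ memN I l) :
    pedge (qdirs I) (SS I l + 2) (SS I l + 1) := by
  refine Or.inr ⟨rfl, ?_, (getD_zig I h hm).1⟩
  have h3 : SS I (l+1) = SS I l + 3 := by rw [SS_succ I h, if_neg hm]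
  have := SS_lt_len I (show l + 1 ≤ k by omega)
  omega

lemma up_B2 (I : Finset (Fin k)) {l : ℕ} (h : l < k) (hm : ¬ memN I l) :
    pedge (qdirs I) (SS I l + 2) (SS I l + 3) := by
  refine Or.inl ⟨rfl, ?_, (getD_zig I h hm).2⟩
  have h3 : SS I (l+1) = SS I l + 3 := by rw [SS_succ I h, if_neg hm]
  have := SS_lt_len I (show l + 1 ≤ k by omega)
  omega

lemma no_out_P (I : Finset (Fin k)) {l : ℕ} (h : l < k) (hm : ¬ memN I l)
    {q : ℕ} (hup : pedge (qdirs I) (SS I l + 1) q) : False := by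
  rcases hup with ⟨_, _, hT⟩ | ⟨hq, _, hF⟩
  · rw [(getD_zig I h hm).1] at hT; simp at hT
  · have : q = SS I l := by omega
    subst this
    rw [getD_qdirs_SS I (le_of_lt h)] at hF; simp at hF

lemma no_in_B (I : Finset (Fin k)) {l : ℕ} (h : l < k) (hm : ¬ memN I l)
    {q : ℕ} (hup : pedge (qdirs I) q (SS I l + 2)) : False := by
  rcases hup with ⟨hq, _, hT⟩ | ⟨hq, _, hF⟩
  · have : q = SS I l + 1 := by omega
    subst this
    rw [(getD_zig I h hm).1] at hT; simp at hT
  · rw [(getD_zig I h hm).2] at hF; simp at hF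

lemma no_in_zero (I : Finset (Fin k)) {q : ℕ} (hup : pedge (qdirs I) q 0) : False := by
  rcases hup with ⟨hq, _, _⟩ | ⟨hq, _, hF⟩
  · omega
  · rw [getD_qdirs_zero I] at hF; simp at hF

lemma no_out_len (I : Finset (Fin k)) {q : ℕ}
    (hup : pedge (qdirs I) ((qdirs I).length) q) : False := by
  rcases hup with ⟨_, hx, _⟩ | ⟨hq, hy, hF⟩
  · omega
  · have hyk : q = SS I k := by rw [len_qdirs] at hq; omega
    subst hyk
    rw [getD_qdirs_SS I (le_refl k)] at hF; simp at hF

lemma out_E_unique (I : Finset (Fin k)) {l : ℕ} (h : l ≤ k) {q : ℕ}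
    (hup : pedge (qdirs I) (SS I l) q) : q = SS I l + 1 := by
  rcases hup with ⟨rfl, _, _⟩ | ⟨hq, hy, hF⟩
  · rfl
  · exfalso
    have h1 : 1 ≤ SS I l := SS_pos I l
    have : q = SS I l - 1 := by omega
    subst this
    rw [getD_below_SS I h] at hF; simp at hF

lemma out_B (I : Finset (Fin k)) {l : ℕ} (h : l < k) (hm : ¬ memN I l) {q : ℕ}
    (hup : pedge (qdirs I) (SS I l + 2) q) :
    q = SS I l + 1 ∨ q = SS I l + 3 := by
  rcases hup with ⟨rfl, _, _⟩ | ⟨hq, _, _⟩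
  · right; rfl
  · left; omega

end Moves

section Levels
open scoped Classical

variable {A : Type} [DecidableEq A] {k : ℕ} {R : Set (Fin k → A)}

lemma plen_eq (a : A) (r : Fin k → A) : plen a r = (qdirs (idxSet a r)).length := rfl

lemma isAt_level {u : DVert R} {a : A} {r : Fin k → A} {x : ℕ}
    (h : isAt u a r x) :
    x ≤ plen a r ∧ (lvlD u : ℤ) = phgt (qdirs (idxSet a r)) x := by
  cases u with
  | base a' =>
      obtain ⟨rfl, rfl⟩ := h
      simp [lvlD, phgt_zero, plen]
  | top r' hr' =>
      obtain ⟨rfl, rfl⟩ := h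
      rw [plen_eq] at *
      refine ⟨le_refl _, ?_⟩
      rw [lvlD, phgt_qdirs_len]
      push_cast; ring
  | inner a' r' hr' j hj1 hj2 =>
      obtain ⟨rfl, rfl, rfl⟩ := h
      refine ⟨le_of_lt hj2, ?_⟩
      rw [lvlD]
      have := (phgt_interior (idxSet a' r') hj1 hj2).1
      rw [Int.toNat_of_nonneg (by omega)]

lemma lvl_le (u : DVert R) : lvlD u ≤ k + 2 := by
  cases u with
  | base a => simp [lvlD]
  | top r hr => simp [lvlD]
  | inner a r hr j hj1 hj2 =>
      have h2 := (phgt_interior (idxSet a r) hj1 hj2).2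
      simp only [lvlD]
      omega

lemma lvl_dedge {u v : DVert R} (h : dedge u v) : lvlD v = lvlD u + 1 := by
  obtain ⟨a, r, hr, x, y, hu, hv, hp⟩ := h
  have h1 := (isAt_level hu).2
  have h2 := (isAt_level hv).2
  have h3 := pedge_phgt hp
  omega

lemma base_of_lvl0 {u : DVert R} (h : lvlD u = 0) : ∃ a, u = DVert.base a := by
  cases u with
  | base a => exact ⟨a, rfl⟩
  | top r hr => simp [lvlD] at h
  | inner a r hr j hj1 hj2 =>
      exfalso
      have := (phgt_interior (idxSet a r) hj1 hj2).1
      simp only [lvlD] at h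
      omega

lemma top_of_lvl {u : DVert R} (h : lvlD u = k + 2) :
    ∃ r hr, u = DVert.top r hr := by
  cases u with
  | base a => simp [lvlD] at h
  | top r hr => exact ⟨r, hr, rfl⟩
  | inner a r hr j hj1 hj2 =>
      exfalso
      have := (phgt_interior (idxSet a r) hj1 hj2).2
      simp only [lvlD] at h
      omega

lemma inner_of_lvl {u : DVert R} (h1 : 0 < lvlD u) (h2 : lvlD u < k + 2) :
    ∃ a r hr p q1 q2, u = DVert.inner a r hr p q1 q2 := by
  cases u with
  | base a => simp [lvlD] at h1
  | top r hr => simp [lvlD] at h2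
  | inner a r hr j hj1 hj2 => exact ⟨a, r, hr, j, hj1, hj2, rfl⟩

lemma mem_idxSet {a : A} {r : Fin k → A} {i : Fin k} :
    i ∈ idxSet a r ↔ a = r i := by
  simp [idxSet]

lemma inner_phgt {a : A} {r : Fin k → A} {hr : r ∈ R} {j : ℕ} {h1 : 0 < j}
    {h2 : j < plen a r} :
    (lvlD (DVert.inner (R := R) a r hr j h1 h2) : ℤ) = phgt (qdirs (idxSet a r)) j := by
  have := (phgt_interior (idxSet a r) h1 h2).1
  simp only [lvlD]
  rw [Int.toNat_of_nonneg (by omega)]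

end Levels
section Walks
open scoped Classical

variable {A : Type} [DecidableEq A] {k : ℕ} {R : Set (Fin k → A)}

lemma walk_preserved {m : ℕ} {F : (Fin m → DVert R) → DVert R}
    (hF : ∀ u v : Fin m → DVert R, (∀ j, dedge (u j) (v j)) → dedge (F u) (F v))
    {ds : List Bool} {u v : Fin m → DVert R}
    (hw : ∀ j, walkAlong ds (u j) (v j)) :
    walkAlong ds (F u) (F v) := by
  choose φ h0 hL hstep using hw
  refine ⟨fun x => F (fun j => φ j x), ?_, ?_, ?_⟩
  · exact congrArg F (funext h0)
  · exact congrArg F (funext hL)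
  · intro x hx
    constructor
    · intro hT; exact hF _ _ (fun j => ((hstep j) x hx).1 hT)
    · intro hFb; exact hF _ _ (fun j => ((hstep j) x hx).2 hFb)

lemma walk_level {ds : List Bool} {u v : DVert R} (h : walkAlong ds u v) :
    (lvlD v : ℤ) = lvlD u + phgt ds ds.length := by
  obtain ⟨φ, h0, hL, hstep⟩ := h
  have key : ∀ x, x ≤ ds.length → (lvlD (φ x) : ℤ) = lvlD u + phgt ds x := by
    intro x
    induction x with
    | zero => intro _; rw [h0, phgt_zero]; ring
    | succ n ih =>
        intro hn
        have hlt : n < ds.length := by omega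
        have ihn := ih (by omega)
        rw [phgt_succ ds hlt]
        cases hb : ds.getD n false
        · have hlv := lvl_dedge ((hstep n hlt).2 hb)
          simp only [Bool.false_eq_true, if_false]
          omega
        · have hlv := lvl_dedge ((hstep n hlt).1 hb)
          simp only [if_true]
          push_cast
          omega
  rw [← hL]
  exact key ds.length (le_refl _)

/-- folding the pattern `Q_I` into the path `Q_J`. -/
noncomputable def foldPos {k : ℕ} (I J : Finset (Fin k)) (p : ℕ) : ℕ :=
  if p = (qdirs I).length then (qdirs J).length
  else if (qdirs I).getD p false = false then SS J ((phgt (qdirs I) p).toNat - 2) + 1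
  else if 1 ≤ p ∧ (qdirs I).getD (p-1) false = false then
    (if memN J ((phgt (qdirs I) p).toNat - 1) then SS J ((phgt (qdirs I) p).toNat - 1)
     else SS J ((phgt (qdirs I) p).toNat - 1) + 2)
  else if p = 0 then 0 else SS J ((phgt (qdirs I) p).toNat - 1)

variable {I J : Finset (Fin k)}

lemma foldPos_zero : foldPos I J 0 = 0 := by
  have h1 : (0:ℕ) ≠ (qdirs I).length := by rw [len_qdirs]; omega
  rw [foldPos, if_neg h1, if_neg (by rw [getD_qdirs_zero I]; simp),
    if_neg (by simp), if_pos rfl]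

lemma foldPos_len : foldPos I J ((qdirs I).length) = (qdirs J).length := by
  rw [foldPos, if_pos rfl]

lemma foldPos_E {l : ℕ} (h : l ≤ k) : foldPos I J (SS I l) = SS J l := by
  have h1 : SS I l ≠ (qdirs I).length := ne_of_lt (SS_lt_len I h)
  have h2 : (phgt (qdirs I) (SS I l)).toNat = l + 1 := by
    rw [phgt_SS I h]; omega
  rw [foldPos, if_neg h1, if_neg (by rw [getD_qdirs_SS I h]; simp),
    if_neg (by rw [getD_below_SS I h]; simp),
    if_neg (by have := SS_pos I l; omega), h2]
  simp

lemma foldPos_P {l : ℕ} (h : l < k) (hm : ¬ memN I l) :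
    foldPos I J (SS I l + 1) = SS J l + 1 := by
  have hs : SS I (l+1) = SS I l + 3 := by rw [SS_succ I h, if_neg hm]
  have h1 : SS I l + 1 ≠ (qdirs I).length := by
    have := SS_lt_len I (show l + 1 ≤ k by omega); omega
  have h2 : (phgt (qdirs I) (SS I l + 1)).toNat = l + 2 := by
    rw [phgt_P I h hm]; omega
  rw [foldPos, if_neg h1, if_pos (getD_zig I h hm).1, h2]
  simp

lemma foldPos_B {l : ℕ} (h : l < k) (hm : ¬ memN I l) :
    foldPos I J (SS I l + 2)
      = if memN J l then SS J l else SS J l + 2 := by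
  have hs : SS I (l+1) = SS I l + 3 := by rw [SS_succ I h, if_neg hm]
  have h1 : SS I l + 2 ≠ (qdirs I).length := by
    have := SS_lt_len I (show l + 1 ≤ k by omega); omega
  have h2 : (phgt (qdirs I) (SS I l + 2)).toNat = l + 1 := by
    rw [phgt_B I h hm]; omega
  have h3 : SS I l + 2 - 1 = SS I l + 1 := by omega
  rw [foldPos, if_neg h1, if_neg (by rw [(getD_zig I h hm).2]; simp),
    if_pos (by rw [h3, (getD_zig I h hm).1]; exact ⟨by omega, rfl⟩), h2]
  simp

lemma walk_exists (a : A) (r : Fin k → A) (hr : r ∈ R) (I : Finset (Fin k))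
    (hI : ∀ i ∈ I, a = r i) :
    walkAlong (qdirs I) (DVert.base a) (DVert.top r hr) := by
  set J := idxSet a r with hJdef
  have hIJ : ∀ l, memN I l → memN J l := by
    rintro l ⟨hl, hmem⟩; exact ⟨hl, mem_idxSet.2 (hI _ hmem)⟩
  have hplen : plen a r = (qdirs J).length := rfl
  let vert : ℕ → DVert R := fun q =>
    if h1 : q = 0 then DVert.base a
    else if h2 : q < plen a r then DVert.inner a r hr q (by omega) h2
    else DVert.top r hr
  have hvert : ∀ q, q ≤ plen a r → isAt (vert q) a r q := by
    intro q hq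
    by_cases h1 : q = 0
    · subst h1; simp only [vert, dif_pos rfl]; exact ⟨rfl, rfl⟩
    by_cases h2 : q < plen a r
    · simp only [vert, dif_neg h1, dif_pos h2]; exact ⟨rfl, rfl, rfl⟩
    · have : q = plen a r := by omega
      simp only [vert, dif_neg h1, dif_neg h2]
      exact ⟨rfl, this⟩
  have hd : ∀ q1 q2, pedge (qdirs J) q1 q2 → dedge (vert q1) (vert q2) := by
    intro q1 q2 hp
    have hb := pedge_bounds hp
    exact ⟨a, r, hr, q1, q2, hvert q1 (by rw [hplen]; omega),
      hvert q2 (by rw [hplen]; omega), hp⟩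
  refine ⟨fun t => vert (foldPos I J t), ?_, ?_, ?_⟩
  · beta_reduce
    rw [foldPos_zero]; simp only [vert, dif_pos rfl]
  · beta_reduce
    rw [foldPos_len]
    have hL0 : (qdirs J).length ≠ 0 := by rw [len_qdirs]; omega
    simp only [vert, dif_neg hL0, hplen, dif_neg (lt_irrefl _)]
  intro t ht
  beta_reduce
  rcases classifyV I (le_of_lt ht) with rfl | hL | ⟨l, hl, rfl⟩ | ⟨l, hl, hm, hcase⟩
  · -- t = 0
    constructor
    · intro _
      have h1 : foldPos I J 1 = 1 := by
        have := foldPos_E (I := I) (J := J) (Nat.zero_le k)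
        rwa [SS_zero, SS_zero] at this
      rw [foldPos_zero, h1]
      exact hd 0 1 (up_zero J)
    · intro hF; rw [getD_qdirs_zero I] at hF; simp at hF
  · omega
  · -- t = SS I l
    constructor
    swap
    · intro hF; rw [getD_qdirs_SS I hl] at hF; simp at hF
    intro _
    rcases Nat.lt_or_ge l k with hlk | hlk
    · by_cases hm : memN I l
      · have e1 : SS I l + 1 = SS I (l+1) := by rw [SS_succ I hlk, if_pos hm]
        have e2 : SS J l + 1 = SS J (l+1) := by
          rw [SS_succ J hlk, if_pos (hIJ l hm)]
        rw [e1, foldPos_E hl, foldPos_E (show l + 1 ≤ k by omega), ← e2]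
        exact hd _ _ (up_E J hl)
      · rw [foldPos_E hl, foldPos_P hlk hm]
        exact hd _ _ (up_E J hl)
    · -- l = k : final edge
      have hlkk : l = k := by omega
      subst hlkk
      have e1 : SS I l + 1 = (qdirs I).length := by rw [len_qdirs]
      have e2 : SS J l + 1 = (qdirs J).length := by rw [len_qdirs]
      rw [e1, foldPos_E hl, foldPos_len, ← e2]
      exact hd _ _ (up_E J hl)
  · rcases hcase with rfl | rfl
    · -- t = SS I l + 1 : the F bit
      constructor
      · intro hT; rw [(getD_zig I hl hm).1] at hT; simp at hT
      intro _
      have e1 : SS I l + 1 + 1 = SS I l + 2 := rfl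
      rw [e1, foldPos_P hl hm, foldPos_B hl hm]
      by_cases hmJ : memN J l
      · rw [if_pos hmJ]
        have e2 : SS J l + 1 = SS J (l+1) := by rw [SS_succ J hl, if_pos hmJ]
        exact hd _ _ (up_E J (le_of_lt hl))
      · rw [if_neg hmJ]
        exact hd _ _ (up_B1 J hl hmJ)
    · -- t = SS I l + 2 : second T of zigzag
      constructor
      swap
      · intro hF; rw [(getD_zig I hl hm).2] at hF; simp at hF
      intro _
      have e1 : SS I l + 2 + 1 = SS I (l+1) := by rw [SS_succ I hl, if_neg hm]
      rw [e1, foldPos_B hl hm, foldPos_E (show l + 1 ≤ k by omega)]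
      by_cases hmJ : memN J l
      · rw [if_pos hmJ, SS_succ J hl, if_pos hmJ]
        exact hd _ _ (up_E J (le_of_lt hl))
      · rw [if_neg hmJ, SS_succ J hl, if_neg hmJ]
        exact hd _ _ (up_B2 J hl hmJ)

end Walks
section Rigidity
open scoped Classical

variable {A : Type} [DecidableEq A] {k : ℕ} {R : Set (Fin k → A)}

lemma walk_levels {ds : List Bool} {φ : ℕ → DVert R}
    (hstep : ∀ x < ds.length,
      (ds.getD x false = true → dedge (φ x) (φ (x + 1))) ∧
      (ds.getD x false = false → dedge (φ (x + 1)) (φ x))) :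
    ∀ x ≤ ds.length, (lvlD (φ x) : ℤ) = lvlD (φ 0) + phgt ds x := by
  intro x
  induction x with
  | zero => intro _; rw [phgt_zero]; ring
  | succ n ih =>
      intro hn
      have hlt : n < ds.length := by omega
      have ihn := ih (by omega)
      rw [phgt_succ ds hlt]
      cases hb : ds.getD n false
      · have hlv := lvl_dedge ((hstep n hlt).2 hb)
        simp only [Bool.false_eq_true, if_false]
        omega
      · have hlv := lvl_dedge ((hstep n hlt).1 hb)
        simp only [if_true]
        push_cast
        omega

lemma walk_in_path {I : Finset (Fin k)} {a : A} {r : Fin k → A} {hr : r ∈ R}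
    (φ : ℕ → DVert R) (h0 : φ 0 = DVert.base a)
    (hL : φ (qdirs I).length = DVert.top r hr)
    (hstep : ∀ x < (qdirs I).length,
      ((qdirs I).getD x false = true → dedge (φ x) (φ (x + 1))) ∧
      ((qdirs I).getD x false = false → dedge (φ (x + 1)) (φ x))) :
    ∃ ψ : ℕ → ℕ,
      (∀ t ≤ (qdirs I).length, isAt (φ t) a r (ψ t)) ∧
      (∀ t < (qdirs I).length,
        ((qdirs I).getD t false = true →
          pedge (qdirs (idxSet a r)) (ψ t) (ψ (t+1))) ∧
        ((qdirs I).getD t false = false →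
          pedge (qdirs (idxSet a r)) (ψ (t+1)) (ψ t))) := by
  set L := (qdirs I).length with hLdef
  have hlen2 : 2 ≤ L := by rw [hLdef, len_qdirs]; have := SS_pos I k; omega
  have hlvl : ∀ t ≤ L, (lvlD (φ t) : ℤ) = phgt (qdirs I) t := by
    intro t ht
    have := walk_levels hstep t ht
    rw [h0] at this
    simpa [lvlD] using this
  have hinner : ∀ t, 0 < t → t < L →
      ∃ aa rr hrr p h1 h2, φ t = DVert.inner aa rr hrr p h1 h2 := by
    intro t ht1 ht2
    have h1 := (phgt_interior I ht1 ht2).1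
    have h2 := (phgt_interior I ht1 ht2).2
    have h3 := hlvl t (le_of_lt ht2)
    exact inner_of_lvl (by omega) (by omega)
  -- the path parameter rr of the interior vertices
  obtain ⟨a1, rr, hrr, p1, hp11, hp12, he1⟩ := hinner 1 one_pos (by omega)
  obtain ⟨a', r', hr', x0, y0, is1, is2, hp⟩ :=
    (hstep 0 (by omega)).1 (getD_qdirs_zero I)
  rw [h0] at is1
  obtain ⟨ha', hx0⟩ := is1
  have hy0 : y0 = 1 := by
    rcases hp with ⟨h, _, _⟩ | ⟨h, _, _⟩ <;> omega
  rw [he1] at is2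
  obtain ⟨haa, hrr', hyp1⟩ := is2
  -- haa : a1 = a', hrr' : rr = r', hyp1 : y0 = p1
  have ha1 : a1 = a := by rw [haa, ← ha']
  -- anchor: every interior vertex lies on the path (a, rr)
  have anchor : ∀ t, 1 ≤ t → t < L → ∃ p, isAt (φ t) a rr p := by
    intro t
    induction t with
    | zero => omega
    | succ n ih =>
        intro _ hlt
        rcases Nat.lt_or_ge n 1 with hn0 | hn1
        · -- n = 0, t = 1
          have : n = 0 := by omega
          subst this
          exact ⟨p1, by rw [he1]; exact ⟨ha1, rfl, rfl⟩⟩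
        · obtain ⟨p, hpA⟩ := ih hn1 (by omega)
          obtain ⟨aa, rr2, hrr2, q, hq1, hq2, he⟩ := hinner n (by omega) (by omega)
          have force : ∀ a'' r'' x, isAt (φ n) a'' r'' x → a'' = a ∧ r'' = rr := by
            intro a'' r'' x hB
            rw [he] at hpA hB
            obtain ⟨e1, e2, e3⟩ := hpA
            obtain ⟨f1, f2, f3⟩ := hB
            exact ⟨by rw [← f1, e1], by rw [← f2, e2]⟩
          cases hb : (qdirs I).getD n false
          · obtain ⟨a'', r'', hr'', x, y, isa, isb, _⟩ := (hstep n (by omega)).2 hb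
            obtain ⟨rfl, rfl⟩ := force _ _ _ isb
            exact ⟨x, isa⟩
          · obtain ⟨a'', r'', hr'', x, y, isa, isb, _⟩ := (hstep n (by omega)).1 hb
            obtain ⟨rfl, rfl⟩ := force _ _ _ isa
            exact ⟨y, isb⟩
  -- rr = r via the last step
  have hrreq : rr = r := by
    have hbl : (qdirs I).getD (L - 1) false = true := by
      have : L - 1 = SS I k := by rw [hLdef, len_qdirs]; omega
      rw [this]; exact getD_qdirs_SS I (le_refl k)
    obtain ⟨a'', r'', hr'', x, y, isa, isb, _⟩ := (hstep (L-1) (by omega)).1 hbl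
    have hL1 : L - 1 + 1 = L := by omega
    rw [hL1, hL] at isb
    obtain ⟨p, hpA⟩ := anchor (L-1) (by omega) (by omega)
    obtain ⟨aa, rr2, hrr2, q, hq1, hq2, he⟩ := hinner (L-1) (by omega) (by omega)
    rw [he] at hpA isa
    obtain ⟨e1, e2, e3⟩ := hpA
    obtain ⟨f1, f2, f3⟩ := isa
    obtain ⟨g1, g2⟩ := isb
    rw [g1, ← f2, e2]
  rw [hrreq] at anchor
  -- define ψ
  set ψ : ℕ → ℕ := fun t =>
    if h : 1 ≤ t ∧ t < L then (anchor t h.1 h.2).choose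
    else if t = 0 then 0 else plen a r with hψdef
  have hisAt : ∀ t ≤ L, isAt (φ t) a r (ψ t) := by
    intro t ht
    by_cases h : 1 ≤ t ∧ t < L
    · simp only [hψdef, dif_pos h]
      exact (anchor t h.1 h.2).choose_spec
    · by_cases ht0 : t = 0
      · subst ht0
        simp only [hψdef, dif_neg h, if_pos rfl]
        rw [h0]; exact ⟨rfl, rfl⟩
      · have : t = L := by omega
        subst this
        simp only [hψdef, dif_neg h, if_neg ht0]
        rw [hL]; exact ⟨rfl, rfl⟩
  have posOf : ∀ t ≤ L, ∀ x, isAt (φ t) a r x → x = ψ t := by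
    intro t ht x hx
    have h2 := hisAt t ht
    cases hφ : φ t with
    | base b => rw [hφ] at hx h2; rw [hx.2, h2.2]
    | top s hs => rw [hφ] at hx h2; rw [hx.2, h2.2]
    | inner aa ss hss q hq1 hq2 => rw [hφ] at hx h2; rw [hx.2.2, h2.2.2]
  have forceInt : ∀ t, 1 ≤ t → t < L → ∀ a'' r'' x, isAt (φ t) a'' r'' x →
      a'' = a ∧ r'' = r := by
    intro t h1 h2 a'' r'' x hB
    have hpA := hisAt t (le_of_lt h2)
    obtain ⟨aa, rr2, hrr2, q, hq1, hq2, he⟩ := hinner t h1 h2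
    rw [he] at hpA hB
    obtain ⟨e1, e2, e3⟩ := hpA
    obtain ⟨f1, f2, f3⟩ := hB
    exact ⟨by rw [← f1, e1], by rw [← f2, e2]⟩
  refine ⟨ψ, hisAt, ?_⟩
  intro t ht
  constructor
  · intro hT
    obtain ⟨a'', r'', hr'', x, y, isa, isb, hpe⟩ := (hstep t ht).1 hT
    have hars : a'' = a ∧ r'' = r := by
      by_cases ht0 : t = 0
      · subst ht0
        exact forceInt 1 (le_refl 1) (by omega) _ _ _ isb
      · exact forceInt t (by omega) ht _ _ _ isa
    obtain ⟨rfl, rfl⟩ := hars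
    rw [posOf t (le_of_lt ht) x isa, posOf (t+1) (by omega) y isb] at hpe
    exact hpe
  · intro hF
    obtain ⟨a'', r'', hr'', x, y, isa, isb, hpe⟩ := (hstep t ht).2 hF
    have hars : a'' = a ∧ r'' = r := by
      by_cases ht0 : t = 0
      · subst ht0
        exact forceInt 1 (le_refl 1) (by omega) _ _ _ isa
      · exact forceInt t (by omega) ht _ _ _ isb
    obtain ⟨rfl, rfl⟩ := hars
    rw [posOf t (le_of_lt ht) y isb, posOf (t+1) (by omega) x isa] at hpe
    exact hpe

lemma walk_top {I : Finset (Fin k)} {a : A} {v : DVert R}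
    (h : walkAlong (qdirs I) (DVert.base a) v) :
    ∃ r hrv, v = DVert.top r hrv := by
  have hl := walk_level h
  rw [phgt_qdirs_len] at hl
  have hb : lvlD (DVert.base (R := R) a) = 0 := rfl
  rw [hb] at hl
  apply top_of_lvl
  omega

lemma rigid {I : Finset (Fin k)} {a : A} {r : Fin k → A} {hr : r ∈ R}
    (hw : walkAlong (qdirs I) (DVert.base a) (DVert.top r hr)) :
    ∀ i ∈ I, a = r i := by
  intro i hi
  obtain ⟨φ, h0, hL, hstep⟩ := hw
  obtain ⟨ψ, hisAt, hmoves⟩ := walk_in_path φ h0 hL hstep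
  set J := idxSet a r with hJdef
  set l : ℕ := (i : ℕ) with hldef
  have hlk : l < k := i.isLt
  have hmemI : memN I l := ⟨hlk, by simpa [hldef] using hi⟩
  set c := SS I l with hcdef
  have hc1 : 1 ≤ c := SS_pos I l
  have hcl : c < (qdirs I).length := SS_lt_len I (le_of_lt hlk)
  have hsucc : SS I (l+1) = c + 1 := by rw [SS_succ I hlk, if_pos hmemI]
  have hc2 : c + 1 < (qdirs I).length := by
    rw [← hsucc]; exact SS_lt_len I hlk
  -- the three true bits
  have hb1 : (qdirs I).getD (c - 1) false = true := getD_below_SS I (le_of_lt hlk)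
  have hb2 : (qdirs I).getD c false = true := getD_qdirs_SS I (le_of_lt hlk)
  have hb3 : (qdirs I).getD (c + 1) false = true := by
    rw [← hsucc]; exact getD_qdirs_SS I hlk
  have hm1 : pedge (qdirs J) (ψ (c-1)) (ψ c) := by
    have := (hmoves (c-1) (by omega)).1 hb1
    rwa [show c - 1 + 1 = c by omega] at this
  have hm2 : pedge (qdirs J) (ψ c) (ψ (c+1)) := (hmoves c hcl).1 hb2
  have hm3 : pedge (qdirs J) (ψ (c+1)) (ψ (c+2)) := (hmoves (c+1) hc2).1 hb3
  -- height of ψ c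
  have hhc : phgt (qdirs J) (ψ c) = (l : ℤ) + 1 := by
    have h1 := (isAt_level (hisAt c (le_of_lt hcl))).2
    have h2 : ∀ t ≤ (qdirs I).length, (lvlD (φ t) : ℤ) = phgt (qdirs I) t := by
      intro t ht
      have := walk_levels hstep t ht
      rw [h0] at this
      simpa [lvlD] using this
    have h3 := h2 c (le_of_lt hcl)
    rw [hcdef] at h3
    rw [phgt_SS I (le_of_lt hlk)] at h3
    rw [← h1, h3]
  -- classify ψ c in Q_J
  have hbnd : ψ c ≤ (qdirs J).length := (pedge_bounds hm2).1
  rcases classifyV J hbnd with h0' | hL' | ⟨t, htk, hteq⟩ | ⟨t, htk, htm, hteq⟩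
  · exact absurd (h0' ▸ hm1) (no_in_zero J)
  · exact absurd (hL' ▸ hm2) (no_out_len J)
  · -- ψ c = SS J t with height t+1 = l+1, so t = l
    have heq2 : (t : ℤ) + 1 = (l : ℤ) + 1 := by rw [← phgt_SS J htk, ← hteq, hhc]
    have htl : t = l := by exact_mod_cast by omega
    subst htl
    have hnext : ψ (c+1) = SS J l + 1 := out_E_unique J htk (hteq ▸ hm2)
    by_cases hmJ : memN J l
    · obtain ⟨hw1, hw2⟩ := hmJ
      have hmm := mem_idxSet.1 hw2
      rwa [show (⟨l, hw1⟩ : Fin k) = i from Fin.ext (by simp [hldef])] at hmm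
    · exact absurd (hnext ▸ hm3) (fun hcon => no_out_P J (by omega) hmJ hcon)
  · rcases hteq with hteq | hteq
    · exact absurd (hteq ▸ hm2) (fun hcon => no_out_P J htk htm hcon)
    · exact absurd (hteq ▸ hm1) (fun hcon => no_in_B J htk htm hcon)

end Rigidity
section Converse
open scoped Classical

variable {A : Type} [DecidableEq A] {k : ℕ} {R : Set (Fin k → A)}

lemma converse_dir {m : ℕ} (hR : R.Nonempty)
    (F : (Fin m → DVert R) → DVert R)
    (hFe : ∀ u v : Fin m → DVert R, (∀ j, dedge (u j) (v j)) → dedge (F u) (F v))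
    (hFW : IsWNU m F) :
    ∃ f : (Fin m → A) → A,
      (∀ ts : Fin m → (Fin k → A), (∀ j, ts j ∈ R) →
        (fun i => f (fun j => ts j i)) ∈ R) ∧ IsWNU m f := by
  obtain ⟨r0, hr0⟩ := hR
  have hbase : ∀ av : Fin m → A, ∃ b, F (fun j => DVert.base (av j)) = DVert.base b := by
    intro av
    have hw : ∀ j : Fin m, walkAlong (qdirs (∅ : Finset (Fin k)))
        (DVert.base (av j)) (DVert.top r0 hr0) :=
      fun j => walk_exists (av j) r0 hr0 ∅ (by simp)
    have hW := walk_preserved hFe hw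
    rw [hFW.1 (DVert.top r0 hr0)] at hW
    have hl := walk_level hW
    rw [phgt_qdirs_len] at hl
    have h2 : lvlD (DVert.top (R := R) r0 hr0) = k + 2 := rfl
    rw [h2] at hl
    apply base_of_lvl0
    omega
  set f : (Fin m → A) → A := fun av => (hbase av).choose with hfdef
  have hfspec : ∀ av, F (fun j => DVert.base (av j)) = DVert.base (f av) :=
    fun av => (hbase av).choose_spec
  refine ⟨f, ?_, ?_, ?_⟩
  · -- preservation of R
    intro ts hts
    by_cases hk : k = 0
    · have hsub : (fun i => f (fun j => ts j i)) = r0 := by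
        funext i
        exact absurd i.isLt (by omega)
      rw [hsub]; exact hr0
    · have hWi : ∀ i : Fin k, walkAlong (qdirs ({i} : Finset (Fin k)))
          (DVert.base (f (fun j => ts j i)))
          (F (fun j => DVert.top (ts j) (hts j))) := by
        intro i
        have hw : ∀ j, walkAlong (qdirs ({i} : Finset (Fin k)))
            (DVert.base (ts j i)) (DVert.top (ts j) (hts j)) := by
          intro j
          apply walk_exists
          intro i' hi'
          rw [Finset.mem_singleton] at hi'
          subst hi'; rfl
        have := walk_preserved hFe hw
        rwa [hfspec] at this
      obtain ⟨rv, hrv, hveq⟩ := walk_top (hWi ⟨0, by omega⟩)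
      have hcomp : ∀ i : Fin k, f (fun j => ts j i) = rv i := by
        intro i
        have hWi' := hWi i
        rw [hveq] at hWi'
        exact rigid hWi' i (Finset.mem_singleton_self i)
      have : (fun i => f (fun j => ts j i)) = rv := funext hcomp
      rw [this]; exact hrv
  · -- idempotence
    intro x
    have h1 := hfspec (fun _ => x)
    rw [hFW.1 (DVert.base x)] at h1
    have := h1.symm
    simpa [DVert.base.injEq] using this
  · -- WNU identities
    intro x y p q
    have hp1 := hfspec (fun i => if i = p then y else x)
    have hq1 := hfspec (fun i => if i = q then y else x)
    have hip : (fun j => DVert.base (R := R) (if j = p then y else x))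
        = (fun j => if j = p then DVert.base y else DVert.base x) :=
      funext fun j => apply_ite DVert.base _ _ _
    have hiq : (fun j => DVert.base (R := R) (if j = q then y else x))
        = (fun j => if j = q then DVert.base y else DVert.base x) :=
      funext fun j => apply_ite DVert.base _ _ _
    rw [hip] at hp1
    rw [hiq] at hq1
    have hFq := hFW.2 (DVert.base x) (DVert.base y) p q
    rw [hp1, hq1] at hFq
    simpa [DVert.base.injEq] using hFq

end Converse
section Forward
open scoped Classical

variable {A : Type} [DecidableEq A] {k : ℕ} {R : Set (Fin k → A)}

/-- the vertex is a "peak" interior vertex (top of a zigzag). -/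
def isP' : DVert R → Prop
  | .inner a r _ p _ _ => (qdirs (idxSet a r)).getD p false = false
  | _ => False

/-- the vertex is a "bottom" interior vertex (bottom of a zigzag). -/
def isB' : DVert R → Prop
  | .inner a r _ p _ _ => 1 ≤ p ∧ (qdirs (idxSet a r)).getD (p-1) false = false
  | _ => False

/-- output position of the polymorphism on inner tuples at level `s`. -/
noncomputable def phiPos (J : Finset (Fin k)) (s : ℕ) (Pc Bc : Prop) : ℕ :=
  if 2 ≤ s ∧ ¬ memN J (s-2) ∧ Pc then SS J (s-2) + 1
  else if s ≤ k ∧ ¬ memN J (s-1) ∧ Bc then SS J (s-1) + 2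
  else SS J (s-1)

lemma phiPos_pos (J : Finset (Fin k)) (s : ℕ) (Pc Bc : Prop) :
    0 < phiPos J s Pc Bc := by
  rw [phiPos]
  have h1 := SS_pos J (s-2)
  have h2 := SS_pos J (s-1)
  split
  · omega
  split <;> omega

lemma phiPos_lt (J : Finset (Fin k)) {s : ℕ} (Pc Bc : Prop)
    (h1 : 1 ≤ s) (h2 : s ≤ k + 1) :
    phiPos J s Pc Bc < (qdirs J).length := by
  have hs1k : s - 1 ≤ k := by omega
  have hL := SS_lt_len J hs1k
  rw [phiPos]
  split
  · next hc =>
      have hs2 : s - 2 < s - 1 := by omega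
      have : SS J (s-2) < SS J (s-1) := by
        have := SS_lt_succ J (show s - 2 < k by omega)
        have h3 : s - 2 + 1 = s - 1 := by omega
        rw [h3] at this
        exact this
      omega
  split
  · next hc =>
      obtain ⟨hsk, hmJ, _⟩ := hc
      have h3 : SS J (s - 1 + 1) = SS J (s-1) + 3 := by
        rw [SS_succ J (show s - 1 < k by omega), if_neg hmJ]
      have h4 : SS J (s - 1 + 1) ≤ SS J k := SS_mono J (by omega) (le_refl k)
      have := SS_lt_len J (le_refl k)
      omega
  · omega

/-- index of a coordinate of minimal level. -/
noncomputable def minIdx {m : ℕ} (u : Fin m → DVert R) (hne : Nonempty (Fin m)) :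
    Fin m :=
  (Finset.univ.filter (fun j => ∀ j', lvlD (u j) ≤ lvlD (u j'))).min' (by
    obtain ⟨j0, _, hj0⟩ := Finset.exists_min_image Finset.univ
      (fun j => lvlD (u j)) ⟨hne.some, Finset.mem_univ _⟩
    exact ⟨j0, Finset.mem_filter.2
      ⟨Finset.mem_univ _, fun j' => hj0 j' (Finset.mem_univ _)⟩⟩)

lemma minIdx_spec {m : ℕ} (u : Fin m → DVert R) (hne : Nonempty (Fin m)) :
    ∀ j', lvlD (u (minIdx u hne)) ≤ lvlD (u j') := by
  have := Finset.min'_mem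
    (Finset.univ.filter (fun j => ∀ j', lvlD (u j) ≤ lvlD (u j'))) (by
      obtain ⟨j0, _, hj0⟩ := Finset.exists_min_image Finset.univ
        (fun j => lvlD (u j)) ⟨hne.some, Finset.mem_univ _⟩
      exact ⟨j0, Finset.mem_filter.2
        ⟨Finset.mem_univ _, fun j' => hj0 j' (Finset.mem_univ _)⟩⟩)
  exact (Finset.mem_filter.1 this).2

lemma minIdx_congr {m : ℕ} (u v : Fin m → DVert R) (hne : Nonempty (Fin m))
    (h : ∀ j, lvlD (v j) = lvlD (u j) + 1) :
    minIdx u hne = minIdx v hne := by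
  have hset : (Finset.univ.filter (fun j => ∀ j', lvlD (u j) ≤ lvlD (u j')))
      = (Finset.univ.filter (fun j => ∀ j', lvlD (v j) ≤ lvlD (v j'))) := by
    ext j
    simp only [Finset.mem_filter, Finset.mem_univ, true_and]
    constructor
    · intro hj j'; rw [h j, h j']; exact Nat.add_le_add_right (hj j') 1
    · intro hj j'; have := hj j'; rw [h j, h j'] at this; omega
  have key : ∀ (s t : Finset (Fin m)) (hs : s.Nonempty) (ht : t.Nonempty),
      s = t → s.min' hs = t.min' ht := by
    rintro s t hs ht rfl; rfl
  exact key _ _ _ _ hset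

/-- common level of a tuple. -/
noncomputable def lvlSup {m : ℕ} (u : Fin m → DVert R) : ℕ :=
  Finset.univ.sup (fun j => lvlD (u j))

lemma lvlSup_eq {m : ℕ} (hm : 0 < m) (u : Fin m → DVert R) {s : ℕ}
    (hs : ∀ j, lvlD (u j) = s) : lvlSup u = s := by
  apply le_antisymm
  · exact Finset.sup_le (fun j _ => le_of_eq (hs j))
  · exact (hs ⟨0, hm⟩) ▸ Finset.le_sup (f := fun j => lvlD (u j)) (Finset.mem_univ (⟨0, hm⟩ : Fin m))

/-- The WNU polymorphism on `D(A)` built from a WNU polymorphism `f` of `(A;R)`. -/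
noncomputable def Fbig {m : ℕ} (f : (Fin m → A) → A)
    (hfR : ∀ ts : Fin m → (Fin k → A), (∀ j, ts j ∈ R) →
      (fun i => f fun j => ts j i) ∈ R)
    (u : Fin m → DVert R) : DVert R :=
  if h0 : ∀ j, ∃ a, u j = DVert.base a then
    DVert.base (f (fun j => (h0 j).choose))
  else if h2 : ∀ j, ∃ r hr, u j = DVert.top r hr then
    DVert.top (fun i => f (fun j => (h2 j).choose i))
      (hfR _ (fun j => (h2 j).choose_spec.choose))
  else if h1 : (∀ j, ∃ a r hr p q1 q2, u j = DVert.inner a r hr p q1 q2) ∧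
      (∀ j j', lvlD (u j) = lvlD (u j')) ∧ 1 ≤ lvlSup u ∧ lvlSup u ≤ k + 1 then
    DVert.inner (f (fun j => (h1.1 j).choose))
      (fun i => f (fun j => (h1.1 j).choose_spec.choose i))
      (hfR _ (fun j => (h1.1 j).choose_spec.choose_spec.choose))
      (phiPos (idxSet (f (fun j => (h1.1 j).choose))
          (fun i => f (fun j => (h1.1 j).choose_spec.choose i)))
        (lvlSup u) (∃ j, isP' (u j)) (∃ j, isB' (u j)))
      (phiPos_pos _ _ _ _) (phiPos_lt _ _ _ h1.2.2.1 h1.2.2.2)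
  else
    u (minIdx u (by
      rcases Nat.eq_zero_or_pos m with rfl | h
      · exact absurd (fun j => j.elim0) h0
      · exact ⟨⟨0, h⟩⟩))

lemma base_inj {a b : A} (h : DVert.base (R := R) a = DVert.base b) : a = b := by
  cases h; rfl

lemma top_inj {r s : Fin k → A} {hr : r ∈ R} {hs : s ∈ R}
    (h : DVert.top r hr = DVert.top s hs) : r = s := by
  cases h; rfl

lemma inner_inj {a b : A} {r s : Fin k → A} {hr hs} {p q : ℕ} {x1 x2 y1 y2}
    (h : DVert.inner (R := R) a r hr p x1 x2 = DVert.inner b s hs q y1 y2) :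
    a = b ∧ r = s ∧ p = q := by
  cases h; exact ⟨rfl, rfl, rfl⟩

lemma top_eq {r s : Fin k → A} (h : r = s) (hr : r ∈ R) (hs : s ∈ R) :
    DVert.top r hr = DVert.top s hs := by subst h; rfl

lemma inner_eq {a b : A} {r s : Fin k → A} (ha : a = b) (hr : r = s) {p q : ℕ}
    (hp : p = q) {h1 h2 x1 x2 y1 y2} :
    DVert.inner (R := R) a r h1 p x1 x2 = DVert.inner b s h2 q y1 y2 := by
  subst ha; subst hr; subst hp; rfl

/-- evaluation of `Fbig` on all-base tuples. -/
lemma Fbig_base {m : ℕ} (f : (Fin m → A) → A) (hfR) (u : Fin m → DVert R)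
    (av : Fin m → A) (hav : ∀ j, u j = DVert.base (av j)) :
    Fbig f hfR u = DVert.base (f av) := by
  have h0 : ∀ j, ∃ a, u j = DVert.base a := fun j => ⟨av j, hav j⟩
  rw [Fbig, dif_pos h0]
  exact congrArg (fun z => DVert.base (R := R) (f z))
    (funext fun j => base_inj (((h0 j).choose_spec).symm.trans (hav j)))

/-- evaluation of `Fbig` on all-top tuples. -/
lemma Fbig_top {m : ℕ} (hm : 0 < m) (f : (Fin m → A) → A) (hfR)
    (u : Fin m → DVert R)
    (rv : Fin m → (Fin k → A)) (hrs : ∀ j, rv j ∈ R)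
    (hav : ∀ j, u j = DVert.top (rv j) (hrs j)) :
    Fbig f hfR u = DVert.top (fun i => f (fun j => rv j i)) (hfR rv hrs) := by
  have h0 : ¬ ∀ j, ∃ a, u j = DVert.base a := by
    intro hall
    obtain ⟨a, ha⟩ := hall ⟨0, hm⟩
    rw [hav ⟨0, hm⟩] at ha
    cases ha
  have h2 : ∀ j, ∃ r hr, u j = DVert.top r hr := fun j => ⟨rv j, hrs j, hav j⟩
  rw [Fbig, dif_neg h0, dif_pos h2]
  have hre : ∀ j, (h2 j).choose = rv j := by
    intro j
    obtain ⟨hrx, hx⟩ := (h2 j).choose_spec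
    exact top_inj (hx.symm.trans (hav j))
  exact top_eq (funext fun i => congrArg f (funext fun j => by rw [hre j])) _ _

/-- evaluation of `Fbig` on same-level all-inner tuples. -/
lemma Fbig_inner {m : ℕ} (hm : 0 < m) (f : (Fin m → A) → A) (hfR)
    (u : Fin m → DVert R)
    (av : Fin m → A) (rv : Fin m → (Fin k → A)) (hrs : ∀ j, rv j ∈ R)
    (pv : Fin m → ℕ) (b1 : ∀ j, 0 < pv j) (b2 : ∀ j, pv j < plen (av j) (rv j))
    (hav : ∀ j, u j = DVert.inner (av j) (rv j) (hrs j) (pv j) (b1 j) (b2 j))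
    (s : ℕ) (hs : ∀ j, lvlD (u j) = s) (hs1 : 1 ≤ s) (hs2 : s ≤ k + 1) :
    Fbig f hfR u = DVert.inner (f av) (fun i => f (fun j => rv j i))
      (hfR rv hrs)
      (phiPos (idxSet (f av) (fun i => f (fun j => rv j i))) s
        (∃ j, isP' (u j)) (∃ j, isB' (u j)))
      (phiPos_pos _ _ _ _) (phiPos_lt _ _ _ hs1 hs2) := by
  have h0 : ¬ ∀ j, ∃ a, u j = DVert.base a := by
    intro hall
    obtain ⟨a, ha⟩ := hall ⟨0, hm⟩
    rw [hav ⟨0, hm⟩] at ha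
    cases ha
  have h2 : ¬ ∀ j, ∃ r hr, u j = DVert.top r hr := by
    intro hall
    obtain ⟨r, hr, ha⟩ := hall ⟨0, hm⟩
    rw [hav ⟨0, hm⟩] at ha
    cases ha
  have hsup : lvlSup u = s := lvlSup_eq hm u hs
  have h1 : (∀ j, ∃ a r hr p q1 q2, u j = DVert.inner a r hr p q1 q2) ∧
      (∀ j j', lvlD (u j) = lvlD (u j')) ∧ 1 ≤ lvlSup u ∧ lvlSup u ≤ k + 1 := by
    refine ⟨fun j => ⟨av j, rv j, hrs j, pv j, b1 j, b2 j, hav j⟩, ?_, ?_, ?_⟩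
    · intro j j'; rw [hs j, hs j']
    · omega
    · omega
  rw [Fbig, dif_neg h0, dif_neg h2, dif_pos h1]
  have hre : ∀ j, (h1.1 j).choose = av j ∧ (h1.1 j).choose_spec.choose = rv j := by
    intro j
    obtain ⟨q1, q2, he⟩ := (h1.1 j).choose_spec.choose_spec.choose_spec.choose_spec
    have := inner_inj (he.symm.trans (hav j))
    exact ⟨this.1, this.2.1⟩
  have hae : (fun j => (h1.1 j).choose) = av := funext fun j => (hre j).1
  have hrel : (fun i => f fun j => (h1.1 j).choose_spec.choose i)
      = (fun i => f fun j => rv j i) := by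
    funext i; apply congrArg; funext j; rw [(hre j).2]
  apply inner_eq
  · rw [hae]
  · exact hrel
  · rw [hae, hrel, hsup]

/-- evaluation of `Fbig` on tuples with non-constant level. -/
lemma Fbig_min {m : ℕ} (hm : 0 < m) (f : (Fin m → A) → A) (hfR)
    (u : Fin m → DVert R)
    (hne : ¬ ∀ j j', lvlD (u j) = lvlD (u j')) :
    Fbig f hfR u = u (minIdx u ⟨⟨0, hm⟩⟩) := by
  have h0 : ¬ ∀ j, ∃ a, u j = DVert.base a := by
    intro hall
    apply hne
    intro j j'
    obtain ⟨a, ha⟩ := hall j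
    obtain ⟨b, hb⟩ := hall j'
    rw [ha, hb]; rfl
  have h2 : ¬ ∀ j, ∃ r hr, u j = DVert.top r hr := by
    intro hall
    apply hne
    intro j j'
    obtain ⟨r, hr, ha⟩ := hall j
    obtain ⟨r', hr', hb⟩ := hall j'
    rw [ha, hb]; rfl
  have h1 : ¬ ((∀ j, ∃ a r hr p q1 q2, u j = DVert.inner a r hr p q1 q2) ∧
      (∀ j j', lvlD (u j) = lvlD (u j')) ∧ 1 ≤ lvlSup u ∧ lvlSup u ≤ k + 1) :=
    fun hc => hne hc.2.1
  rw [Fbig, dif_neg h0, dif_neg h2, dif_neg h1]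

/-- trichotomy for interior positions of `Q_I` at height `s`. -/
lemma pos_trichotomy (I : Finset (Fin k)) {p s : ℕ} (hp0 : 0 < p)
    (hpl : p < (qdirs I).length) (hs : phgt (qdirs I) p = (s : ℤ)) :
    (p = SS I (s-1) ∧ ((qdirs I).getD p false = true) ∧
      ¬ (1 ≤ p ∧ (qdirs I).getD (p-1) false = false) ∧ 1 ≤ s ∧ s ≤ k + 1)
    ∨ (2 ≤ s ∧ ¬ memN I (s-2) ∧ p = SS I (s-2) + 1 ∧
        (qdirs I).getD p false = false)
    ∨ (s ≤ k ∧ ¬ memN I (s-1) ∧ p = SS I (s-1) + 2 ∧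
        (qdirs I).getD (p-1) false = false ∧ (qdirs I).getD p false = true) := by
  have hinterior := phgt_interior I hp0 hpl
  have hs1 : 1 ≤ s := by omega
  have hs2 : s ≤ k + 1 := by
    have : (s : ℤ) ≤ (k : ℤ) + 1 := by omega
    exact_mod_cast this
  rcases classifyV I (le_of_lt hpl) with rfl | hL | ⟨t, htk, rfl⟩ | ⟨t, htk, htm, hteq⟩
  · omega
  · omega
  · -- p = SS I t, E-form
    left
    have hph := phgt_SS I htk
    rw [hph] at hs
    have hts : t = s - 1 := by
      have h' : t + 1 = s := by exact_mod_cast hs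
      omega
    subst hts
    refine ⟨rfl, getD_qdirs_SS I htk, ?_, hs1, hs2⟩
    rintro ⟨hp1, hpf⟩
    rw [getD_below_SS I htk] at hpf
    exact absurd hpf (by simp)
  · rcases hteq with rfl | rfl
    · -- P-form
      right; left
      have hph := phgt_P I htk htm
      rw [hph] at hs
      have hts : t = s - 2 := by
        have h' : t + 2 = s := by exact_mod_cast hs
        omega
      have hs2' : 2 ≤ s := by
        have h' : t + 2 = s := by exact_mod_cast hs
        omega
      subst hts
      exact ⟨hs2', htm, rfl, (getD_zig I htk htm).1⟩
    · -- B-form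
      right; right
      have hph := phgt_B I htk htm
      rw [hph] at hs
      have hts : t = s - 1 := by
        have h' : t + 1 = s := by exact_mod_cast hs
        omega
      have hsk : s ≤ k := by
        have h' : t + 1 = s := by exact_mod_cast hs
        omega
      subst hts
      refine ⟨hsk, htm, rfl, ?_, (getD_zig I htk htm).2⟩
      rw [show SS I (s-1) + 2 - 1 = SS I (s-1) + 1 by omega]
      exact (getD_zig I htk htm).1

end Forward
section EdgePres
open scoped Classical

variable {A : Type} [DecidableEq A] {k : ℕ} {R : Set (Fin k → A)}

lemma idx_inter {m : ℕ} (hm : 0 < m) (f : (Fin m → A) → A)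
    (av : Fin m → A) (rv : Fin m → (Fin k → A)) {l : ℕ}
    (hall : ∀ j, memN (idxSet (av j) (rv j)) l) :
    memN (idxSet (f av) (fun i => f (fun j => rv j i))) l := by
  obtain ⟨hlk, _⟩ := hall ⟨0, hm⟩
  refine ⟨hlk, mem_idxSet.2 ?_⟩
  apply congrArg
  funext j
  obtain ⟨hlk', hmem⟩ := hall j
  exact mem_idxSet.1 hmem

theorem Fbig_edge {m : ℕ} (hm : 2 ≤ m) (f : (Fin m → A) → A)
    (hfR : ∀ ts : Fin m → (Fin k → A), (∀ j, ts j ∈ R) →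
      (fun i => f fun j => ts j i) ∈ R)
    (u v : Fin m → DVert R)
    (h : ∀ j, dedge (u j) (v j)) : dedge (Fbig f hfR u) (Fbig f hfR v) := by
  have hm0 : 0 < m := by omega
  have hlv : ∀ j, lvlD (v j) = lvlD (u j) + 1 := fun j => lvl_dedge (h j)
  by_cases heq : ∀ j j', lvlD (u j) = lvlD (u j')
  case neg =>
    have heqv : ¬ ∀ j j', lvlD (v j) = lvlD (v j') := by
      intro hc; apply heq; intro j j'
      have := hc j j'; rw [hlv j, hlv j'] at this; omega
    rw [Fbig_min hm0 f hfR u heq, Fbig_min hm0 f hfR v heqv,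
      ← minIdx_congr u v _ hlv]
    exact h _
  case pos =>
  obtain ⟨s, hus⟩ : ∃ s, ∀ j, lvlD (u j) = s := ⟨_, fun j => heq j ⟨0, hm0⟩⟩
  have hvs : ∀ j, lvlD (v j) = s + 1 := fun j => by rw [hlv j, hus j]
  have hsk2 : s + 1 ≤ k + 2 := by
    have hle := lvl_le (v ⟨0, hm0⟩)
    rw [hvs ⟨0, hm0⟩] at hle
    exact hle
  rcases Nat.eq_zero_or_pos s with rfl | hs1
  · -- s = 0 : all u base, all v inner at level 1
    have hub : ∀ j, ∃ a, u j = DVert.base a := fun j => base_of_lvl0 (hus j)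
    choose av hav using hub
    have hvi : ∀ j, ∃ a r hr p q1 q2, v j = DVert.inner a r hr p q1 q2 :=
      fun j => inner_of_lvl (by rw [hvs j]; omega) (by rw [hvs j]; omega)
    choose bv rv hrs pv b1 b2 hbv using hvi
    have hkey : ∀ j, bv j = av j ∧ pv j = 1 ∧
        pedge (qdirs (idxSet (av j) (rv j))) 0 (pv j) := by
      intro j
      obtain ⟨a', r', hr', x, y, is1, is2, hp⟩ := h j
      rw [hav j] at is1
      obtain ⟨e1, e2⟩ := is1
      rw [hbv j] at is2
      obtain ⟨f1, f2, f3⟩ := is2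
      have hy : y = 1 := by
        rcases hp with ⟨h1, _, _⟩ | ⟨h1, _, _⟩ <;> omega
      subst e2
      refine ⟨by rw [f1, ← e1], by omega, ?_⟩
      rw [← e1, ← f2] at hp
      rwa [← f3]
    have hbav : av = bv := funext fun j => ((hkey j).1).symm
    subst hbav
    rw [Fbig_base f hfR u av hav,
      Fbig_inner hm0 f hfR v av rv hrs pv b1 b2 hbv 1 hvs (le_refl 1) (by omega)]
    have hBc : ¬ ∃ j, isB' (v j) := by
      rintro ⟨j, hBj⟩
      rw [hbv j] at hBj
      have hF : (qdirs (idxSet (av j) (rv j))).getD (pv j - 1) false = false := hBj.2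
      rw [(hkey j).2.1] at hF
      simp only [Nat.sub_self] at hF
      rw [getD_qdirs_zero] at hF
      exact absurd hF (by simp)
    have hphi : phiPos (idxSet (f av) (fun i => f (fun j => rv j i))) 1
        (∃ j, isP' (v j)) (∃ j, isB' (v j)) = 1 := by
      rw [phiPos, if_neg (fun hc => by omega), if_neg (fun hc => hBc hc.2.2)]
      exact SS_zero _
    exact ⟨f av, (fun i => f (fun j => rv j i)), hfR rv hrs, 0, 1,
      ⟨rfl, rfl⟩, ⟨rfl, rfl, hphi.symm⟩, up_zero _⟩
  rcases Nat.lt_or_ge (s+1) (k+2) with hmid | htop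
  · -- middle case : 1 ≤ s ≤ k, both inner
    have hsk : s ≤ k := by omega
    have hui : ∀ j, ∃ a r hr p q1 q2, u j = DVert.inner a r hr p q1 q2 :=
      fun j => inner_of_lvl (by rw [hus j]; omega) (by rw [hus j]; omega)
    have hvi : ∀ j, ∃ a r hr p q1 q2, v j = DVert.inner a r hr p q1 q2 :=
      fun j => inner_of_lvl (by rw [hvs j]; omega) (by rw [hvs j]; omega)
    choose av rv hrs pv b1 b2 hav using hui
    choose bv sv hss qv c1 c2 hbv using hvi
    have hkey : ∀ j, bv j = av j ∧ sv j = rv j ∧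
        pedge (qdirs (idxSet (av j) (rv j))) (pv j) (qv j) := by
      intro j
      obtain ⟨a', r', hr', x, y, is1, is2, hp⟩ := h j
      rw [hav j] at is1
      obtain ⟨e1, e2, e3⟩ := is1
      rw [hbv j] at is2
      obtain ⟨f1, f2, f3⟩ := is2
      refine ⟨by rw [f1, ← e1], by rw [f2, ← e2], ?_⟩
      rw [← e1, ← e2] at hp
      rw [← e3, ← f3]
      exact hp
    have hbav : av = bv := funext fun j => ((hkey j).1).symm
    subst hbav
    have hsrv : rv = sv := funext fun j => ((hkey j).2.1).symm
    subst hsrv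
    have hp : ∀ j, pedge (qdirs (idxSet (av j) (rv j))) (pv j) (qv j) :=
      fun j => (hkey j).2.2
    have hphu : ∀ j, phgt (qdirs (idxSet (av j) (rv j))) (pv j) = (s : ℤ) := by
      intro j
      have h1 : (lvlD (u j) : ℤ) = phgt (qdirs (idxSet (av j) (rv j))) (pv j) := by
        rw [hav j]; exact inner_phgt
      rw [hus j] at h1
      omega
    have hPcu : ¬ ∃ j, isP' (u j) := by
      rintro ⟨j, hPj⟩
      rw [hav j] at hPj
      have hF : (qdirs (idxSet (av j) (rv j))).getD (pv j) false = false := hPj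
      obtain ⟨t, htk, htm, hteq⟩ := bitF_class _ (b2 j) hF
      exact no_out_P _ htk htm (hteq ▸ hp j)
    have hBcv : ¬ ∃ j, isB' (v j) := by
      rintro ⟨j, hBj⟩
      rw [hbv j] at hBj
      obtain ⟨hq1, hF⟩ := hBj
      obtain ⟨t, htk, htm, hteq⟩ := bitF_class _ (by
        have hlen := c2 j
        rw [plen_eq] at hlen
        omega) hF
      have hq : qv j = SS (idxSet (av j) (rv j)) t + 2 := by omega
      exact no_in_B _ htk htm (hq ▸ hp j)
    rw [Fbig_inner hm0 f hfR u av rv hrs pv b1 b2 hav s hus hs1 (by omega),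
      Fbig_inner hm0 f hfR v av rv hss qv c1 c2 hbv (s+1) hvs (by omega) (by omega)]
    refine ⟨f av, (fun i => f (fun j => rv j i)), hfR rv hrs, _, _,
      ⟨rfl, rfl, rfl⟩, ⟨rfl, rfl, rfl⟩, ?_⟩
    set J := idxSet (f av) (fun i => f (fun j => rv j i)) with hJdef
    have e1 : s + 1 - 2 = s - 1 := by omega
    have e2 : s + 1 - 1 = s := by omega
    by_cases hB : s ≤ k ∧ ¬ memN J (s-1) ∧ (∃ j, isB' (u j))
    · have hU : phiPos J s (∃ j, isP' (u j)) (∃ j, isB' (u j))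
          = SS J (s-1) + 2 := by
        rw [phiPos, if_neg (fun hc => hPcu hc.2.2), if_pos hB]
      by_cases hPv : 2 ≤ s + 1 ∧ ¬ memN J (s+1-2) ∧ (∃ j, isP' (v j))
      · have hV : phiPos J (s+1) (∃ j, isP' (v j)) (∃ j, isB' (v j))
            = SS J (s-1) + 1 := by
          rw [phiPos, if_pos hPv, e1]
        rw [hU, hV]
        exact up_B1 J (by omega) hB.2.1
      · have hV : phiPos J (s+1) (∃ j, isP' (v j)) (∃ j, isB' (v j))
            = SS J s := by
          rw [phiPos, if_neg hPv, if_neg (fun hc => hBcv hc.2.2), e2]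
        have e3 : SS J s = SS J (s-1) + 3 := by
          have h' : SS J ((s-1)+1) = SS J (s-1) + 3 := by
            rw [SS_succ J (by omega), if_neg hB.2.1]
          rwa [show (s-1)+1 = s by omega] at h'
        rw [hU, hV, e3]
        exact up_B2 J (by omega) hB.2.1
    · have hU : phiPos J s (∃ j, isP' (u j)) (∃ j, isB' (u j))
          = SS J (s-1) := by
        rw [phiPos, if_neg (fun hc => hPcu hc.2.2), if_neg hB]
      by_cases hmJ : memN J (s-1)
      · have hV : phiPos J (s+1) (∃ j, isP' (v j)) (∃ j, isB' (v j))
            = SS J s := by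
          rw [phiPos, if_neg (fun hc => hc.2.1 (e1.symm ▸ hmJ)),
            if_neg (fun hc => hBcv hc.2.2), e2]
        have e3 : SS J s = SS J (s-1) + 1 := by
          have h' : SS J ((s-1)+1) = SS J (s-1) + 1 := by
            rw [SS_succ J (by omega), if_pos hmJ]
          rwa [show (s-1)+1 = s by omega] at h'
        rw [hU, hV, e3]
        exact up_E J (by omega)
      · -- find a coordinate whose path has a zigzag at block s-1
        obtain ⟨j0, hj0⟩ : ∃ j0, ¬ memN (idxSet (av j0) (rv j0)) (s-1) := by
          by_contra hc
          push_neg at hc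
          exact hmJ (idx_inter hm0 f av rv hc)
        have hnB : ¬ ∃ j, isB' (u j) := fun hc => hB ⟨hsk, hmJ, hc⟩
        rcases pos_trichotomy (idxSet (av j0) (rv j0)) (b1 j0) (b2 j0) (hphu j0)
          with ⟨hE, _, _, _, _⟩ | ⟨_, _, hPp, hPb⟩ | ⟨_, hBm, hBp, hBb, _⟩
        · -- E-form
          have hq0 : qv j0 = SS (idxSet (av j0) (rv j0)) (s-1) + 1 :=
            out_E_unique _ (by omega) (hE ▸ hp j0)
          have hPvEx : ∃ j, isP' (v j) := by
            refine ⟨j0, ?_⟩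
            rw [hbv j0]
            show (qdirs (idxSet (av j0) (rv j0))).getD (qv j0) false = false
            rw [hq0]
            exact (getD_zig _ (by omega) hj0).1
          have hV : phiPos J (s+1) (∃ j, isP' (v j)) (∃ j, isB' (v j))
              = SS J (s-1) + 1 := by
            rw [phiPos, if_pos ⟨by omega, e1.symm ▸ hmJ, hPvEx⟩, e1]
          rw [hU, hV]
          exact up_E J (by omega)
        · exact absurd ⟨j0, by rw [hav j0]; exact hPb⟩ hPcu
        · refine absurd ⟨j0, ?_⟩ hnB
          rw [hav j0]
          exact ⟨by rw [hBp]; omega, hBb⟩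
  · -- top case : s = k + 1, all v top
    have hsk1 : s = k + 1 := by omega
    subst hsk1
    have hvt : ∀ j, ∃ r hr, v j = DVert.top r hr :=
      fun j => top_of_lvl (by rw [hvs j])
    choose rv hrs hbv using hvt
    have hui : ∀ j, ∃ a r hr p q1 q2, u j = DVert.inner a r hr p q1 q2 :=
      fun j => inner_of_lvl (by rw [hus j]; omega) (by rw [hus j]; omega)
    choose av urv hurs pv b1 b2 hav using hui
    have hkey : ∀ j, urv j = rv j ∧
        pedge (qdirs (idxSet (av j) (urv j))) (pv j) (plen (av j) (urv j)) := by
      intro j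
      obtain ⟨a', r', hr', x, y, is1, is2, hp⟩ := h j
      rw [hav j] at is1
      obtain ⟨e1, e2, e3⟩ := is1
      rw [hbv j] at is2
      obtain ⟨f1, f2⟩ := is2
      refine ⟨e2.trans f1.symm, ?_⟩
      rw [← e1, ← e2] at hp f2
      rw [← e3, ← f2]
      exact hp
    have hurveq : urv = rv := funext fun j => (hkey j).1
    subst hurveq
    have hp : ∀ j, pedge (qdirs (idxSet (av j) (urv j))) (pv j)
        (plen (av j) (urv j)) := fun j => (hkey j).2
    have hPcu : ¬ ∃ j, isP' (u j) := by
      rintro ⟨j, hPj⟩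
      rw [hav j] at hPj
      have hF : (qdirs (idxSet (av j) (urv j))).getD (pv j) false = false := hPj
      obtain ⟨t, htk, htm, hteq⟩ := bitF_class _ (b2 j) hF
      exact no_out_P _ htk htm (hteq ▸ hp j)
    rw [Fbig_inner hm0 f hfR u av urv hurs pv b1 b2 hav (k+1) hus (by omega)
        (le_refl _),
      Fbig_top hm0 f hfR v urv hrs hbv]
    refine ⟨f av, (fun i => f (fun j => urv j i)), hfR urv hrs, _,
      plen (f av) (fun i => f (fun j => urv j i)),
      ⟨rfl, rfl, rfl⟩, ⟨rfl, rfl⟩, ?_⟩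
    set J := idxSet (f av) (fun i => f (fun j => urv j i)) with hJdef
    rw [phiPos, if_neg (fun hc => hPcu hc.2.2),
      if_neg (fun hc => absurd hc.1 (by omega))]
    have e3 : plen (f av) (fun i => f (fun j => urv j i)) = SS J (k+1-1) + 1 := by
      rw [plen_eq, len_qdirs]
      rfl
    rw [e3]
    exact up_E J (by omega)

end EdgePres
section FbigWNU
open scoped Classical

variable {A : Type} [DecidableEq A] {k : ℕ} {R : Set (Fin k → A)}

lemma exists_ne_fin {m : ℕ} (hm : 2 ≤ m) (p : Fin m) : ∃ q : Fin m, q ≠ p := by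
  by_cases hp : (p : ℕ) = 0
  · exact ⟨⟨1, by omega⟩, fun hc => by rw [Fin.ext_iff] at hc; simp [hp] at hc⟩
  · exact ⟨⟨0, by omega⟩, fun hc => by rw [Fin.ext_iff] at hc; simp at hc; omega⟩

lemma exists_one_off {m : ℕ} (hm : 2 ≤ m) (P : DVert R → Prop) (x y : DVert R)
    (p : Fin m) :
    (∃ j : Fin m, P (if j = p then y else x)) ↔ P y ∨ P x := by
  constructor
  · rintro ⟨j, hj⟩
    by_cases hjp : j = p
    · rw [if_pos hjp] at hj; exact Or.inl hj
    · rw [if_neg hjp] at hj; exact Or.inr hj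
  · rintro (hy | hx)
    · exact ⟨p, by rw [if_pos rfl]; exact hy⟩
    · obtain ⟨q, hq⟩ := exists_ne_fin hm p
      exact ⟨q, by rw [if_neg hq]; exact hx⟩

lemma phiPos_congr {k : ℕ} {J J' : Finset (Fin k)} (hJ : J = J') {s : ℕ}
    {P P' B B' : Prop} (hP : P ↔ P') (hB : B ↔ B') :
    phiPos J s P B = phiPos J' s P' B' := by
  subst hJ; rw [propext hP, propext hB]

lemma lvl_inner_bounds {a : A} {r : Fin k → A} {hr : r ∈ R} {p : ℕ} {h1 h2} :
    1 ≤ lvlD (DVert.inner (R := R) a r hr p h1 h2) ∧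
    lvlD (DVert.inner (R := R) a r hr p h1 h2) ≤ k + 1 := by
  have := phgt_interior (idxSet a r) h1 h2
  simp only [lvlD]
  omega

lemma phiPos_self (I : Finset (Fin k)) {p s : ℕ} (hp0 : 0 < p)
    (hpl : p < (qdirs I).length) (hs : phgt (qdirs I) p = (s : ℤ)) :
    phiPos I s ((qdirs I).getD p false = false)
      (1 ≤ p ∧ (qdirs I).getD (p-1) false = false) = p := by
  rcases pos_trichotomy I hp0 hpl hs with
    ⟨hE, hbT, hnB, hs1, hs2⟩ | ⟨hs2, hm2, hpe, hbF⟩ | ⟨hsk, hm1, hpe, hbF, hbT⟩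
  · rw [phiPos, if_neg, if_neg]
    · exact hE.symm
    · intro hc; exact hnB hc.2.2
    · intro hc; have := hc.2.2; rw [hbT] at this; simp at this
  · rw [phiPos, if_pos ⟨hs2, hm2, hbF⟩]
    exact hpe.symm
  · rw [phiPos, if_neg, if_pos ⟨hsk, hm1, by omega, hbF⟩]
    · exact hpe.symm
    · intro hc; have := hc.2.2; rw [hbT] at this; simp at this

lemma Fbig_oneoff_min {m : ℕ} (hm : 2 ≤ m) (f : (Fin m → A) → A) (hfR)
    (x y : DVert R) (p : Fin m) (hxy : lvlD x ≠ lvlD y) :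
    Fbig f hfR (fun i => if i = p then y else x)
      = (if lvlD x < lvlD y then x else y) := by
  have hm0 : 0 < m := by omega
  obtain ⟨q, hq⟩ := exists_ne_fin hm p
  have hne : ¬ ∀ j j', lvlD ((fun i => if i = p then y else x) j)
      = lvlD ((fun i => if i = p then y else x) j') := by
    intro hc
    have h1 : lvlD y = lvlD x := by
      have h2 := hc p q
      simpa [hq] using h2
    exact hxy h1.symm
  rw [Fbig_min hm0 f hfR _ hne]
  have hspec := minIdx_spec (fun i => if i = p then y else x)
    (⟨⟨0, hm0⟩⟩ : Nonempty (Fin m))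
  by_cases hlt : lvlD x < lvlD y
  · rw [if_pos hlt]
    by_cases hj : minIdx (fun i => if i = p then y else x)
        (⟨⟨0, hm0⟩⟩ : Nonempty (Fin m)) = p
    · exfalso
      have h2 := hspec q
      rw [hj, if_pos rfl, if_neg hq] at h2
      omega
    · rw [if_neg hj]
  · rw [if_neg hlt]
    by_cases hj : minIdx (fun i => if i = p then y else x)
        (⟨⟨0, hm0⟩⟩ : Nonempty (Fin m)) = p
    · rw [hj, if_pos rfl]
    · exfalso
      have h2 := hspec p
      rw [if_pos rfl, if_neg hj] at h2
      omega

theorem Fbig_WNU {m : ℕ} (hm : 2 ≤ m) (f : (Fin m → A) → A)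
    (hfR : ∀ ts : Fin m → (Fin k → A), (∀ j, ts j ∈ R) →
      (fun i => f fun j => ts j i) ∈ R)
    (hfW : IsWNU m f) : IsWNU m (Fbig f hfR) := by
  have hm0 : 0 < m := by omega
  constructor
  · -- idempotence
    intro x
    cases x with
    | base a =>
        rw [Fbig_base f hfR _ (fun _ => a) (fun j => rfl), hfW.1]
    | top r hr =>
        rw [Fbig_top hm0 f hfR _ (fun _ => r) (fun _ => hr) (fun j => rfl)]
        exact top_eq (funext fun i => hfW.1 (r i)) _ _
    | inner a r hr p hp1 hp2 =>
        have hb := lvl_inner_bounds (a := a) (r := r) (hr := hr) (h1 := hp1) (h2 := hp2)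
        rw [Fbig_inner hm0 f hfR _ (fun _ => a) (fun _ => r) (fun _ => hr)
          (fun _ => p) (fun _ => hp1) (fun _ => hp2) (fun j => rfl)
          (lvlD (DVert.inner a r hr p hp1 hp2)) (fun j => rfl) hb.1 hb.2]
        apply inner_eq (hfW.1 a) (funext fun i => hfW.1 (r i))
        have hJ : idxSet (f fun _ => a) (fun i => f fun _ => r i) = idxSet a r := by
          rw [hfW.1 a]
          congr 1
          funext i
          exact hfW.1 (r i)
        rw [hJ]
        have hPC : (∃ _ : Fin m, isP' (DVert.inner (R := R) a r hr p hp1 hp2))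
            = ((qdirs (idxSet a r)).getD p false = false) :=
          propext ⟨fun ⟨_, hh⟩ => hh, fun hh => ⟨⟨0, hm0⟩, hh⟩⟩
        have hBC : (∃ _ : Fin m, isB' (DVert.inner (R := R) a r hr p hp1 hp2))
            = (1 ≤ p ∧ (qdirs (idxSet a r)).getD (p-1) false = false) :=
          propext ⟨fun ⟨_, hh⟩ => hh, fun hh => ⟨⟨0, hm0⟩, hh⟩⟩
        rw [hPC, hBC]
        have hsv : phgt (qdirs (idxSet a r)) p
            = ((lvlD (DVert.inner (R := R) a r hr p hp1 hp2) : ℕ) : ℤ) :=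
          inner_phgt.symm
        exact phiPos_self (idxSet a r) hp1 hp2 hsv
  · -- the WNU identities
    intro x y p q
    by_cases hxy : x = y
    · subst hxy
      have he : ∀ pp : Fin m, (fun i => if i = pp then x else x) = (fun _ : Fin m => x) :=
        fun pp => funext fun i => ite_self x
      rw [he p, he q]
    by_cases hlv : lvlD x = lvlD y
    · -- equal levels : same constructor type
      cases x with
      | base xa =>
          cases y with
          | base ya =>
              rw [Fbig_base f hfR _ (fun j => if j = p then ya else xa)
                  (fun j => by by_cases hj : j = p <;> simp [hj]),
                Fbig_base f hfR _ (fun j => if j = q then ya else xa)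
                  (fun j => by by_cases hj : j = q <;> simp [hj]),
                hfW.2 xa ya p q]
          | top yr hyr => simp [lvlD] at hlv
          | inner ya yr hyr yp y1 y2 =>
              exfalso
              have := lvl_inner_bounds (a := ya) (r := yr) (hr := hyr) (h1 := y1) (h2 := y2)
              simp only [lvlD] at hlv this
              omega
      | top xr hxr =>
          cases y with
          | base ya => simp [lvlD] at hlv
          | inner ya yr hyr yp y1 y2 =>
              exfalso
              have := lvl_inner_bounds (a := ya) (r := yr) (hr := hyr) (h1 := y1) (h2 := y2)
              simp only [lvlD] at hlv this
              omega
          | top yr hyr =>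
              have hrsP : ∀ j : Fin m, (if j = p then yr else xr) ∈ R :=
                fun j => by by_cases hj : j = p <;> simp only [hj, if_true, if_false,
                  if_pos, if_neg, ite_true, ite_false] <;> first | exact hyr | exact hxr
              have hrsQ : ∀ j : Fin m, (if j = q then yr else xr) ∈ R :=
                fun j => by by_cases hj : j = q <;> simp only [hj, if_true, if_false,
                  if_pos, if_neg, ite_true, ite_false] <;> first | exact hyr | exact hxr
              rw [Fbig_top hm0 f hfR _ (fun j => if j = p then yr else xr) hrsP
                  (fun j => by by_cases hj : j = p <;> simp only [hj, ite_true, ite_false]),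
                Fbig_top hm0 f hfR _ (fun j => if j = q then yr else xr) hrsQ
                  (fun j => by by_cases hj : j = q <;> simp only [hj, ite_true, ite_false])]
              apply top_eq
              funext i
              have e1 : ∀ pp : Fin m, (fun j => (if j = pp then yr else xr) i)
                  = (fun j => if j = pp then yr i else xr i) :=
                fun pp => funext fun j => apply_ite (fun g : Fin k → A => g i) _ _ _
              rw [e1 p, e1 q]
              exact hfW.2 (xr i) (yr i) p q
      | inner xa xr hxr xp x1 x2 =>
          cases y with
          | base ya =>
              exfalso
              have := lvl_inner_bounds (a := xa) (r := xr) (hr := hxr) (h1 := x1) (h2 := x2)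
              simp only [lvlD] at hlv this
              omega
          | top yr hyr =>
              exfalso
              have := lvl_inner_bounds (a := xa) (r := xr) (hr := hxr) (h1 := x1) (h2 := x2)
              simp only [lvlD] at hlv this
              omega
          | inner ya yr hyr yp y1 y2 =>
              have hbx := lvl_inner_bounds (a := xa) (r := xr) (hr := hxr) (h1 := x1) (h2 := x2)
              set X := DVert.inner (R := R) xa xr hxr xp x1 x2 with hXdef
              set Y := DVert.inner (R := R) ya yr hyr yp y1 y2 with hYdef
              have hsP : ∀ j : Fin m, lvlD ((fun i => if i = p then Y else X) j) = lvlD X := by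
                intro j
                by_cases hj : j = p <;> simp only [hj, ite_true, ite_false]
                exact hlv.symm
              have hsQ : ∀ j : Fin m, lvlD ((fun i => if i = q then Y else X) j) = lvlD X := by
                intro j
                by_cases hj : j = q <;> simp only [hj, ite_true, ite_false]
                exact hlv.symm
              rw [Fbig_inner hm0 f hfR _ (fun j => if j = p then ya else xa)
                  (fun j => if j = p then yr else xr)
                  (fun j => by by_cases hj : j = p <;> simp only [hj, ite_true, ite_false]
                    <;> first | exact hyr | exact hxr)
                  (fun j => if j = p then yp else xp)
                  (fun j => by by_cases hj : j = p <;> simp only [hj, ite_true, ite_false]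
                    <;> first | exact y1 | exact x1)
                  (fun j => by by_cases hj : j = p <;> simp only [hj, ite_true, ite_false]
                    <;> first | exact y2 | exact x2)
                  (fun j => by by_cases hj : j = p <;> simp only [hj, ite_true, ite_false] <;> rfl)
                  (lvlD X) hsP hbx.1 hbx.2,
                Fbig_inner hm0 f hfR _ (fun j => if j = q then ya else xa)
                  (fun j => if j = q then yr else xr)
                  (fun j => by by_cases hj : j = q <;> simp only [hj, ite_true, ite_false]
                    <;> first | exact hyr | exact hxr)
                  (fun j => if j = q then yp else xp)
                  (fun j => by by_cases hj : j = q <;> simp only [hj, ite_true, ite_false]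
                    <;> first | exact y1 | exact x1)
                  (fun j => by by_cases hj : j = q <;> simp only [hj, ite_true, ite_false]
                    <;> first | exact y2 | exact x2)
                  (fun j => by by_cases hj : j = q <;> simp only [hj, ite_true, ite_false] <;> rfl)
                  (lvlD X) hsQ hbx.1 hbx.2]
              have hA : f (fun j => if j = p then ya else xa)
                  = f (fun j => if j = q then ya else xa) := hfW.2 xa ya p q
              have hRf : (fun i => f fun j => (if j = p then yr else xr) i)
                  = (fun i => f fun j => (if j = q then yr else xr) i) := by
                funext i
                have e1 : ∀ pp : Fin m, (fun j => (if j = pp then yr else xr) i)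
                    = (fun j => if j = pp then yr i else xr i) :=
                  fun pp => funext fun j => apply_ite (fun g : Fin k → A => g i) _ _ _
                rw [e1 p, e1 q]
                exact hfW.2 (xr i) (yr i) p q
              apply inner_eq hA hRf
              apply phiPos_congr (by rw [hA, hRf])
              · exact (exists_one_off hm isP' X Y p).trans
                  (exists_one_off hm isP' X Y q).symm
              · exact (exists_one_off hm isB' X Y p).trans
                  (exists_one_off hm isB' X Y q).symm
    · rw [Fbig_oneoff_min hm f hfR x y p hlv, Fbig_oneoff_min hm f hfR x y q hlv]

end FbigWNU

/-- `(A; R)` has an `m`-ary weak near-unanimity polymorphism (for `m ≥ 2`) if and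
only if the digraph `D(A)` has one. -/
theorem WNU_iff_D_WNU {A : Type} [DecidableEq A] [Fintype A] {k : ℕ}
    (R : Set (Fin k → A)) (hR : R.Nonempty) (m : ℕ) (hm : 2 ≤ m) :
    (∃ f : (Fin m → A) → A,
      (∀ ts : Fin m → (Fin k → A), (∀ j, ts j ∈ R) →
        (fun i => f (fun j => ts j i)) ∈ R) ∧ IsWNU m f) ↔
    (∃ F : (Fin m → DVert R) → DVert R,
      (∀ u v : Fin m → DVert R, (∀ j, dedge (u j) (v j)) → dedge (F u) (F v)) ∧
      IsWNU m F) := by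
  constructor
  · rintro ⟨f, hfR, hfW⟩
    exact ⟨Fbig f hfR, fun u v h => Fbig_edge hm f hfR u v h, Fbig_WNU hm f hfR hfW⟩
  · rintro ⟨F, hFe, hFW⟩
    exact converse_dir hR F hFe hFW
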